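/- arXiv:math/9512216 — 7 statements merged into one kernel-verified Lean document; each statement's English description precedes it below -/
import Mathlib

section
/- Let w ∈ ℂ and suppose g : [-1,1] → ℂ is twice continuously differentiable, not identically zero, satisfies g(-1) = g(1) = 0, and -g''(x) - w·α(x)²·g(x) + β(x)·g(x) = 0 for all x ∈ [-1,1]. Then w is real (Im w = 0). -/
open Set

/-- If `g : [-1,1] → ℂ` is a nontrivial twice continuously differentiable
solution of the Dirichlet problem `-g'' - w·α²·g + β·g = 0`, `g(±1) = 0`, where `α, β` are
continuous real-valued functions on `[-1,1]` with `α` nonvanishing, then `w` is real. -/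
theorem stmt0 (α β : ℝ → ℝ)
    (hα : ContinuousOn α (Icc (-1) 1)) (hβ : ContinuousOn β (Icc (-1) 1))
    (hα0 : ∀ x ∈ Icc (-1 : ℝ) 1, α x ≠ 0)
    (w : ℂ) (g : ℝ → ℂ)
    (hg : ContDiffOn ℝ 2 g (Icc (-1) 1))
    (hg0 : ∃ x ∈ Icc (-1 : ℝ) 1, g x ≠ 0)
    (hgm : g (-1) = 0) (hgp : g 1 = 0)
    (hode : ∀ x ∈ Icc (-1 : ℝ) 1,
      -(iteratedDerivWithin 2 g (Icc (-1) 1) x) - w * ((α x : ℂ)) ^ 2 * g x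
        + (β x : ℂ) * g x = 0) :
    w.im = 0 := by
  set s : Set ℝ := Icc (-1 : ℝ) 1 with hs_def
  have hs : UniqueDiffOn ℝ s := uniqueDiffOn_Icc (by norm_num)
  set g1 : ℝ → ℂ := derivWithin g s with hg1_def
  have hgd : DifferentiableOn ℝ g s := hg.differentiableOn (by norm_num)
  have hg1 : ContDiffOn ℝ 1 g1 s := hg.derivWithin hs (by norm_num)
  have hg1d : DifferentiableOn ℝ g1 s := hg1.differentiableOn (by norm_num)
  -- the second derivative satisfies the ODE
  have hode' : ∀ x ∈ s, derivWithin g1 s x = ((β x : ℂ) - w * (α x : ℂ) ^ 2) * g x := by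
    intro x hx
    have h2 : iteratedDerivWithin 2 g s x = derivWithin g1 s x := by
      rw [iteratedDerivWithin_succ]
      exact derivWithin_congr (fun y hy => congrFun iteratedDerivWithin_one y)
        (congrFun iteratedDerivWithin_one x)
    have := hode x hx
    rw [h2] at this
    linear_combination -this
  -- φ = Im(g' ⬝ conj g)
  set φ : ℝ → ℝ := fun x => (g1 x * (starRingEnd ℂ) (g x)).im with hφ_def
  set ψ : ℝ → ℝ := fun x => -w.im * ((α x) ^ 2 * ((g x).re * (g x).re + (g x).im * (g x).im)) with hψ_def
  have hφderiv : ∀ x ∈ s, HasDerivWithinAt φ (ψ x) s x := by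
    intro x hx
    have h1 : HasDerivWithinAt g (g1 x) s x := (hgd x hx).hasDerivWithinAt
    have h2 : HasDerivWithinAt g1 (derivWithin g1 s x) s x := (hg1d x hx).hasDerivWithinAt
    have hc : HasDerivWithinAt (fun y => (starRingEnd ℂ) (g y)) ((starRingEnd ℂ) (g1 x)) s x :=
      h1.star
    have hprod : HasDerivWithinAt (fun y => g1 y * (starRingEnd ℂ) (g y))
        (derivWithin g1 s x * (starRingEnd ℂ) (g x) + g1 x * (starRingEnd ℂ) (g1 x)) s x :=
      h2.mul hc
    have him := (Complex.imCLM.hasFDerivAt).comp_hasDerivWithinAt x hprod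
    refine him.congr_deriv ?_
    rw [hode' x hx]
    simp only [Complex.imCLM_apply, Complex.add_im, Complex.mul_im, Complex.mul_re,
      Complex.conj_re, Complex.conj_im, Complex.sub_re, Complex.sub_im,
      ← Complex.ofReal_pow, Complex.ofReal_re, Complex.ofReal_im]
    ring
  have hgc : ContinuousOn g s := hg.continuousOn
  have hφcont : ContinuousOn φ s := by
    apply Complex.continuous_im.comp_continuousOn
    exact hg1.continuousOn.mul (Complex.continuous_conj.comp_continuousOn hgc)
  have hre : ContinuousOn (fun x => (g x).re * (g x).re + (g x).im * (g x).im) s := by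
    have h1 := Complex.continuous_re.comp_continuousOn hgc
    have h2 := Complex.continuous_im.comp_continuousOn hgc
    exact (h1.mul h1).add (h2.mul h2)
  have hψcont : ContinuousOn ψ s := by
    apply ContinuousOn.mul continuousOn_const
    exact ((hα.pow 2).mul hre)
  have hab : (-1 : ℝ) ≤ 1 := by norm_num
  have hψint : IntervalIntegrable ψ MeasureTheory.volume (-1) 1 := by
    apply ContinuousOn.intervalIntegrable
    rwa [uIcc_of_le hab]
  have hftc : ∫ y in (-1 : ℝ)..1, ψ y = φ 1 - φ (-1) := by
    apply intervalIntegral.integral_eq_sub_of_hasDeriv_right_of_le hab hφcont _ hψint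
    intro x hx
    have hmem : s ∈ nhds x := Icc_mem_nhds hx.1 hx.2
    exact (((hφderiv x (Ioo_subset_Icc_self hx)).hasDerivAt hmem).hasDerivWithinAt)
  have hφ1 : φ 1 = 0 := by simp [hφ_def, hgp]
  have hφm : φ (-1) = 0 := by simp [hφ_def, hgm]
  rw [hφ1, hφm, sub_zero] at hftc
  have hI : ∫ y in (-1 : ℝ)..1, ψ y
      = -w.im * ∫ y in (-1 : ℝ)..1, (α y) ^ 2 * ((g y).re * (g y).re + (g y).im * (g y).im) := by
    rw [← intervalIntegral.integral_const_mul]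
  have hImul : w.im * ∫ y in (-1 : ℝ)..1, (α y) ^ 2 * ((g y).re * (g y).re + (g y).im * (g y).im) = 0 := by
    rw [hftc] at hI
    linarith [hI]
  -- positivity of the integral
  set f : ℝ → ℝ := fun x => (α x) ^ 2 * ((g x).re * (g x).re + (g x).im * (g x).im) with hf_def
  have hfcont : ContinuousOn f s := (hα.pow 2).mul hre
  have hfnonneg : ∀ x, 0 ≤ f x := fun x =>
    mul_nonneg (sq_nonneg _) (add_nonneg (mul_self_nonneg _) (mul_self_nonneg _))
  obtain ⟨x₀, hx₀, hgx₀⟩ := hg0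
  have hx₀o : x₀ ∈ Ioo (-1 : ℝ) 1 := by
    rcases eq_or_lt_of_le hx₀.1 with h | h
    · exfalso; apply hgx₀; rw [← h]; exact hgm
    rcases eq_or_lt_of_le hx₀.2 with h' | h'
    · exfalso; apply hgx₀; rw [h']; exact hgp
    exact ⟨h, h'⟩
  have hfx₀ : 0 < f x₀ := by
    have hαx := hα0 x₀ hx₀
    have h1 : 0 < (α x₀) ^ 2 := by positivity
    have h2 := Complex.normSq_pos.mpr hgx₀
    rw [Complex.normSq_apply] at h2
    exact mul_pos h1 h2
  have hIpos : 0 < ∫ y in (-1 : ℝ)..1, f y := by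
    -- find a small interval around x₀ where f is bounded below
    have hca : ContinuousAt f x₀ :=
      (hfcont x₀ hx₀).continuousAt (Icc_mem_nhds hx₀o.1 hx₀o.2)
    obtain ⟨δ, hδpos, hδ⟩ := Metric.continuousAt_iff.mp hca (f x₀ / 2) (by linarith)
    set ε : ℝ := min (δ / 2) (min ((x₀ + 1) / 2) ((1 - x₀) / 2)) with hε_def
    have hεpos : 0 < ε := by
      apply lt_min (by linarith)
      exact lt_min (by linarith [hx₀o.1]) (by linarith [hx₀o.2])
    have hε1 : ε ≤ (x₀ + 1) / 2 := (min_le_right _ _).trans (min_le_left _ _)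
    have hε2 : ε ≤ (1 - x₀) / 2 := (min_le_right _ _).trans (min_le_right _ _)
    have hε3 : ε ≤ δ / 2 := min_le_left _ _
    have hsub : Icc (x₀ - ε) (x₀ + ε) ⊆ s := by
      intro y hy
      exact ⟨by linarith [hy.1], by linarith [hy.2]⟩
    have hlow : ∀ y ∈ Icc (x₀ - ε) (x₀ + ε), f x₀ / 2 ≤ f y := by
      intro y hy
      have : dist y x₀ < δ := by
        rw [Real.dist_eq, abs_sub_lt_iff]
        constructor <;> [linarith [hy.2]; linarith [hy.1]]
      have := hδ this
      rw [Real.dist_eq, abs_sub_lt_iff] at this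
      linarith [this.2]
    have hint1 : IntervalIntegrable f MeasureTheory.volume (-1) (x₀ - ε) := by
      apply ContinuousOn.intervalIntegrable
      apply hfcont.mono
      rw [uIcc_of_le (by linarith [hx₀o.1, hε1])]
      intro y hy
      exact ⟨hy.1, le_trans hy.2 (by linarith [hx₀o.2])⟩
    have hint2 : IntervalIntegrable f MeasureTheory.volume (x₀ - ε) (x₀ + ε) := by
      apply ContinuousOn.intervalIntegrable
      apply hfcont.mono
      rwa [uIcc_of_le (by linarith)]
    have hint3 : IntervalIntegrable f MeasureTheory.volume (x₀ + ε) 1 := by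
      apply ContinuousOn.intervalIntegrable
      apply hfcont.mono
      rw [uIcc_of_le (by linarith [hx₀o.2, hε2])]
      intro y hy
      exact ⟨le_trans (by linarith [hx₀o.1]) hy.1, hy.2⟩
    have hsplit : ∫ y in (-1 : ℝ)..1, f y
        = (∫ y in (-1 : ℝ)..(x₀ - ε), f y) + (∫ y in (x₀ - ε)..(x₀ + ε), f y)
          + ∫ y in (x₀ + ε)..1, f y := by
      rw [intervalIntegral.integral_add_adjacent_intervals hint1 hint2,
        intervalIntegral.integral_add_adjacent_intervals (hint1.trans hint2) hint3]
    have h1 : 0 ≤ ∫ y in (-1 : ℝ)..(x₀ - ε), f y :=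
      intervalIntegral.integral_nonneg (by linarith [hx₀o.1, hε1]) (fun y _ => hfnonneg y)
    have h3 : 0 ≤ ∫ y in (x₀ + ε)..1, f y :=
      intervalIntegral.integral_nonneg (by linarith [hx₀o.2, hε2]) (fun y _ => hfnonneg y)
    have h2 : 0 < ∫ y in (x₀ - ε)..(x₀ + ε), f y := by
      have hconst : ∫ y in (x₀ - ε)..(x₀ + ε), (f x₀ / 2) = (2 * ε) * (f x₀ / 2) := by
        rw [intervalIntegral.integral_const, smul_eq_mul]
        ring_nf
      calc (0 : ℝ) < (2 * ε) * (f x₀ / 2) := by positivity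
        _ = ∫ y in (x₀ - ε)..(x₀ + ε), (f x₀ / 2) := hconst.symm
        _ ≤ ∫ y in (x₀ - ε)..(x₀ + ε), f y := by
            apply intervalIntegral.integral_mono_on (by linarith) _ hint2 hlow
            exact intervalIntegrable_const
    rw [hsplit]; linarith
  have := mul_eq_zero.mp hImul
  rcases this with h | h
  · exact h
  · exact absurd h (ne_of_gt hIpos)
end

section
/- Let w ∈ ℂ and suppose g : [-1,1] → ℂ is twice continuously differentiable, not identically zero, satisfies g(-1) = g(1) = 0, and -g''(x) - w·α(x)²·g(x) + β(x)·g(x) = 0 for all x ∈ [-1,1]. Then Re(w) ≥ -(sup_{x∈[-1,1]}|β(x)|)/(inf_{x∈[-1,1]} α(x)²). -/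
open Set Filter

open scoped RealInnerProductSpace Topology

/-- Second derivative test: if `f` has a local max at `x₀`, is differentiable near `x₀`
with derivative `f'`, and `f'` has derivative `c` at `x₀`, then `c ≤ 0`. -/
lemma second_deriv_test {f f' : ℝ → ℝ} {x₀ c δ : ℝ} (hδ : 0 < δ)
    (hf : ∀ x ∈ Ioo (x₀ - δ) (x₀ + δ), HasDerivAt f (f' x) x)
    (hmax : IsLocalMax f x₀) (hf' : HasDerivAt f' c x₀) : c ≤ 0 := by
  by_contra hc
  push_neg at hc
  have hx₀ : x₀ ∈ Ioo (x₀ - δ) (x₀ + δ) := by constructor <;> linarith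
  have hf'0 : f' x₀ = 0 := by
    have h := hmax.deriv_eq_zero
    rwa [(hf x₀ hx₀).deriv] at h
  have hT : Tendsto (slope f' x₀) (𝓝[≠] x₀) (𝓝 c) :=
    hasDerivAt_iff_tendsto_slope.1 hf'
  have h1 : ∀ᶠ x in 𝓝[≠] x₀, 0 < slope f' x₀ x := hT.eventually (eventually_gt_nhds hc)
  have h2 : ∀ᶠ x in 𝓝[>] x₀, 0 < slope f' x₀ x :=
    h1.filter_mono (nhdsWithin_mono x₀ fun y hy => ne_of_gt hy)
  have hIoo : ∀ᶠ x in 𝓝[>] x₀, x ∈ Ioo (x₀ - δ) (x₀ + δ) :=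
    Filter.eventually_of_mem (nhdsWithin_le_nhds (Ioo_mem_nhds (by linarith) (by linarith)))
      fun x hx => hx
  have h4 : ∀ᶠ x in 𝓝[>] x₀, 0 < f' x ∧ x ∈ Ioo (x₀ - δ) (x₀ + δ) := by
    filter_upwards [h2, hIoo, self_mem_nhdsWithin] with x hx hx2 hx3
    refine ⟨?_, hx2⟩
    have hxgt : x₀ < x := hx3
    rw [slope_def_field, hf'0, sub_zero] at hx
    rcases div_pos_iff.mp hx with ⟨h, _⟩ | ⟨_, h⟩
    · exact h
    · linarith
  obtain ⟨b, hb, hsub⟩ := mem_nhdsGT_iff_exists_Ioo_subset.1 h4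
  have hb' : x₀ < b := hb
  have hcont : ∀ x ∈ Ico x₀ b, HasDerivAt f (f' x) x := by
    intro x hx
    rcases eq_or_lt_of_le hx.1 with h | h
    · rw [← h]; exact hf x₀ hx₀
    · exact hf x (hsub ⟨h, hx.2⟩).2
  have hmono : StrictMonoOn f (Ico x₀ b) := by
    apply strictMonoOn_of_deriv_pos (convex_Ico _ _)
    · exact fun x hx => (hcont x hx).continuousAt.continuousWithinAt
    · intro x hx
      rw [interior_Ico] at hx
      rw [(hcont x (Ioo_subset_Ico_self hx)).deriv]
      exact (hsub hx).1
  have h5 : ∀ᶠ x in 𝓝[>] x₀, f x ≤ f x₀ ∧ x ∈ Ioo x₀ b :=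
    (hmax.filter_mono nhdsWithin_le_nhds).and (Ioo_mem_nhdsGT hb')
  obtain ⟨x, hx1, hx2⟩ := h5.exists
  have : f x₀ < f x := hmono ⟨le_refl _, hb'⟩ ⟨hx2.1.le, hx2.2⟩ hx2.1
  linarith

/-- Real inner product on ℂ of `c * v` with `v` is `c.re * ‖v‖ ^ 2`. -/
lemma inner_smul_self (c v : ℂ) : ⟪c * v, v⟫ = c.re * ‖v‖ ^ 2 := by
  have h : ‖v‖ ^ 2 = v.re ^ 2 + v.im ^ 2 := by
    rw [Complex.sq_norm, Complex.normSq_apply]; ring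
  rw [Complex.inner, h]
  simp [Complex.mul_re, Complex.mul_im]
  ring

/-- If `g : [-1,1] → ℂ` is a nontrivial twice continuously differentiable
solution of the Dirichlet problem `-g'' - w·α²·g + β·g = 0`, `g(±1) = 0`, where `α, β` are
continuous real-valued functions on `[-1,1]` with `α` nonvanishing, then
`Re w ≥ -(sup |β|) / (inf α²)`. -/
theorem stmt1 (α β : ℝ → ℝ)
    (hα : ContinuousOn α (Icc (-1) 1)) (hβ : ContinuousOn β (Icc (-1) 1))
    (hα0 : ∀ x ∈ Icc (-1 : ℝ) 1, α x ≠ 0)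
    (w : ℂ) (g : ℝ → ℂ)
    (hg : ContDiffOn ℝ 2 g (Icc (-1) 1))
    (hg0 : ∃ x ∈ Icc (-1 : ℝ) 1, g x ≠ 0)
    (hgm : g (-1) = 0) (hgp : g 1 = 0)
    (hode : ∀ x ∈ Icc (-1 : ℝ) 1,
      -(iteratedDerivWithin 2 g (Icc (-1) 1) x) - w * ((α x : ℂ)) ^ 2 * g x
        + (β x : ℂ) * g x = 0) :
    w.re ≥ -(⨆ x : Icc (-1 : ℝ) 1, |β x|) / (⨅ x : Icc (-1 : ℝ) 1, (α x) ^ 2) := by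
  set I : Set ℝ := Icc (-1 : ℝ) 1 with hIdef
  have hI : UniqueDiffOn ℝ I := uniqueDiffOn_Icc (by norm_num)
  have hIc : IsCompact I := isCompact_Icc
  have hne : I.Nonempty := ⟨0, by constructor <;> norm_num⟩
  haveI : Nonempty I := hne.to_subtype
  set u : ℝ → ℝ := fun x => ⟪g x, g x⟫ with hu
  have hgc : ContinuousOn g I := hg.continuousOn
  have huc : ContinuousOn u I := hgc.inner hgc
  obtain ⟨x₀, hx₀I, hx₀max⟩ := hIc.exists_isMaxOn hne huc
  obtain ⟨y, hyI, hy⟩ := hg0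
  have hupos : 0 < u x₀ := by
    have h1 : 0 < u y := by
      rw [hu]; simp only
      rw [real_inner_self_eq_norm_sq]
      exact pow_pos (norm_pos_iff.mpr hy) 2
    exact lt_of_lt_of_le h1 (hx₀max hyI)
  have hx₀ne : x₀ ≠ -1 ∧ x₀ ≠ 1 := by
    constructor <;> rintro rfl <;> simp [hu, hgm, hgp] at hupos
  have hx₀Ioo : x₀ ∈ Ioo (-1 : ℝ) 1 :=
    ⟨lt_of_le_of_ne hx₀I.1 (Ne.symm hx₀ne.1), lt_of_le_of_ne hx₀I.2 hx₀ne.2⟩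
  set g1 : ℝ → ℂ := derivWithin g I with hg1def
  have hg1 : ContDiffOn ℝ 1 g1 I := hg.derivWithin hI (by norm_num)
  have hmemI : ∀ {x : ℝ}, x ∈ Ioo (-1 : ℝ) 1 → I ∈ 𝓝 x := fun hx => Icc_mem_nhds hx.1 hx.2
  have hgd : ∀ x ∈ Ioo (-1 : ℝ) 1, HasDerivAt g (g1 x) x := by
    intro x hx
    exact ((hg.differentiableOn (by norm_num) x
      (Ioo_subset_Icc_self hx)).hasDerivWithinAt).hasDerivAt (hmemI hx)
  have hg2 : ∀ x ∈ Ioo (-1 : ℝ) 1,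
      HasDerivAt g1 (((β x : ℂ) - w * (α x : ℂ) ^ 2) * g x) x := by
    intro x hx
    have hxI : x ∈ I := Ioo_subset_Icc_self hx
    have hd : DifferentiableWithinAt ℝ g1 I x :=
      hg1.differentiableOn (by norm_num) x hxI
    have h2 : HasDerivAt g1 (derivWithin g1 I x) x :=
      hd.hasDerivWithinAt.hasDerivAt (hmemI hx)
    have h3 : iteratedDerivWithin 2 g I x = derivWithin g1 I x := by
      rw [show (2 : ℕ) = 1 + 1 from rfl, iteratedDerivWithin_succ]
      exact derivWithin_congr (fun y hy => congrFun iteratedDerivWithin_one y)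
        (congrFun iteratedDerivWithin_one x)
    have h4 : derivWithin g1 I x = ((β x : ℂ) - w * (α x : ℂ) ^ 2) * g x := by
      rw [← h3]
      have := hode x hxI
      linear_combination -this
    rwa [h4] at h2
  set u1 : ℝ → ℝ := fun x => 2 * ⟪g1 x, g x⟫ with hu1
  have hud : ∀ x ∈ Ioo (-1 : ℝ) 1, HasDerivAt u (u1 x) x := by
    intro x hx
    have h := (hgd x hx).inner ℝ (hgd x hx)
    refine h.congr_deriv ?_
    rw [real_inner_comm (g1 x) (g x)]; ring
  have hu1d : HasDerivAt u1
      (2 * (⟪((β x₀ : ℂ) - w * (α x₀ : ℂ) ^ 2) * g x₀, g x₀⟫ + ⟪g1 x₀, g1 x₀⟫)) x₀ := by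
    have h := ((hg2 x₀ hx₀Ioo).inner ℝ (hgd x₀ hx₀Ioo)).const_mul (2 : ℝ)
    refine h.congr_deriv ?_
    ring
  have hlocmax : IsLocalMax u x₀ := hx₀max.isLocalMax (hmemI hx₀Ioo)
  set δ : ℝ := min (x₀ + 1) (1 - x₀) with hδdef
  have hδ : 0 < δ := by
    apply lt_min <;> [linarith [hx₀Ioo.1]; linarith [hx₀Ioo.2]]
  have hsubI : Ioo (x₀ - δ) (x₀ + δ) ⊆ Ioo (-1 : ℝ) 1 := by
    intro x hx
    have h1 : δ ≤ x₀ + 1 := min_le_left _ _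
    have h2 : δ ≤ 1 - x₀ := min_le_right _ _
    exact ⟨by linarith [hx.1], by linarith [hx.2]⟩
  have hkey : 2 * (⟪((β x₀ : ℂ) - w * (α x₀ : ℂ) ^ 2) * g x₀, g x₀⟫
      + ⟪g1 x₀, g1 x₀⟫) ≤ 0 :=
    second_deriv_test hδ (fun x hx => hud x (hsubI hx)) hlocmax hu1d
  have hA : ⟪((β x₀ : ℂ) - w * (α x₀ : ℂ) ^ 2) * g x₀, g x₀⟫
      = (β x₀ - w.re * α x₀ ^ 2) * u x₀ := by
    rw [inner_smul_self]
    have : ((β x₀ : ℂ) - w * (α x₀ : ℂ) ^ 2).re = β x₀ - w.re * α x₀ ^ 2 := by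
      simp [Complex.sub_re, Complex.mul_re, ← Complex.ofReal_pow]
    rw [this, hu]
    simp only
    rw [real_inner_self_eq_norm_sq]
  have hB : 0 ≤ ⟪g1 x₀, g1 x₀⟫ := real_inner_self_nonneg
  rw [hA] at hkey
  have hstep : (β x₀ - w.re * α x₀ ^ 2) * u x₀ ≤ 0 := by linarith
  have ha2 : 0 < α x₀ ^ 2 :=
    (sq_nonneg (α x₀)).lt_of_ne (Ne.symm (pow_ne_zero 2 (hα0 x₀ hx₀I)))
  have hre : β x₀ ≤ w.re * α x₀ ^ 2 := by nlinarith
  -- sup and inf bounds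
  set S : ℝ := ⨆ x : I, |β x| with hS
  set m : ℝ := ⨅ x : I, (α x) ^ 2 with hm
  have hbddA : BddAbove (range fun x : I => |β x|) := by
    have himg : (fun t => |β t|) '' I = range fun x : I => |β x| :=
      Set.image_eq_range _ _
    rw [← himg]
    exact (hIc.image_of_continuousOn hβ.abs).bddAbove
  have hSle : |β x₀| ≤ S := le_ciSup hbddA ⟨x₀, hx₀I⟩
  have hS0 : 0 ≤ S := (abs_nonneg _).trans hSle
  have hbddB : BddBelow (range fun x : I => (α x) ^ 2) :=
    ⟨0, by rintro _ ⟨x, rfl⟩; positivity⟩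
  have hmle : m ≤ α x₀ ^ 2 := ciInf_le hbddB ⟨x₀, hx₀I⟩
  have hm0 : 0 < m := by
    obtain ⟨z, hzI, hz⟩ := hIc.exists_isMinOn hne (hα.pow 2)
    have h1 : 0 < α z ^ 2 :=
      (sq_nonneg (α z)).lt_of_ne (Ne.symm (pow_ne_zero 2 (hα0 z hzI)))
    have h2 : α z ^ 2 ≤ m := le_ciInf fun x => hz x.2
    linarith
  have hchain1 : -S / α x₀ ^ 2 ≤ w.re := by
    rw [div_le_iff₀ ha2]
    nlinarith [neg_abs_le (β x₀)]
  have hchain2 : -S / m ≤ -S / α x₀ ^ 2 := by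
    rw [neg_div, neg_div, neg_le_neg_iff]
    exact div_le_div_of_nonneg_left hS0 hm0 hmle
  exact le_trans hchain2 hchain1
end

section
/- Let w ∈ ℂ and suppose g : [-1,1] → ℂ is twice continuously differentiable, not identically zero, satisfies g(-1) = g(1) = 0, and -g''(x) - w·α(x)²·g(x) + β(x)·g(x) = 0 for all x ∈ [-1,1]. If in addition β(x) ≥ 0 for all x ∈ [-1,1], then Re(w) > 0. -/
open Set

/-- If `g : [-1,1] → ℂ` is a nontrivial twice continuously differentiable
solution of the Dirichlet problem `-g'' - w·α²·g + β·g = 0`, `g(±1) = 0`, where `α, β` are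
continuous real-valued functions on `[-1,1]` with `α` nonvanishing, then
if moreover `β ≥ 0` on `[-1,1]` then `Re w > 0`. -/
theorem stmt2 (α β : ℝ → ℝ)
    (hα : ContinuousOn α (Icc (-1) 1)) (hβ : ContinuousOn β (Icc (-1) 1))
    (hα0 : ∀ x ∈ Icc (-1 : ℝ) 1, α x ≠ 0)
    (w : ℂ) (g : ℝ → ℂ)
    (hg : ContDiffOn ℝ 2 g (Icc (-1) 1))
    (hg0 : ∃ x ∈ Icc (-1 : ℝ) 1, g x ≠ 0)
    (hgm : g (-1) = 0) (hgp : g 1 = 0)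
    (hβ0 : ∀ x ∈ Icc (-1 : ℝ) 1, 0 ≤ β x)
    (hode : ∀ x ∈ Icc (-1 : ℝ) 1,
      -(iteratedDerivWithin 2 g (Icc (-1) 1) x) - w * ((α x : ℂ)) ^ 2 * g x
        + (β x : ℂ) * g x = 0) :
    0 < w.re := by
  have h11 : (-1 : ℝ) < 1 := by norm_num
  set s : Set ℝ := Icc (-1 : ℝ) 1 with hsdef
  have huicc : uIcc (-1 : ℝ) 1 = s := uIcc_of_le h11.le
  have huniq : UniqueDiffOn ℝ s := uniqueDiffOn_Icc h11
  set g1 : ℝ → ℂ := derivWithin g s with hg1def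
  set g2 : ℝ → ℂ := derivWithin g1 s with hg2def
  have hgcont : ContinuousOn g s := hg.continuousOn
  have hg1cd : ContDiffOn ℝ 1 g1 s := hg.derivWithin huniq (by norm_num)
  have hg1cont : ContinuousOn g1 s := hg1cd.continuousOn
  have hg1diffOn : DifferentiableOn ℝ g1 s := hg1cd.differentiableOn (by norm_num)
  have hg2cont : ContinuousOn g2 s := (ContDiffOn.derivWithin (m := 0) hg1cd huniq (by norm_num)).continuousOn
  have hgdiffOn : DifferentiableOn ℝ g s := hg.differentiableOn (by norm_num)
  -- iterated derivative equals g2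
  have hiter : ∀ x ∈ s, iteratedDerivWithin 2 g s x = g2 x := by
    intro x hx
    rw [show (2 : ℕ) = 1 + 1 from rfl, iteratedDerivWithin_succ',
      show (1 : ℕ) = 0 + 1 from rfl, iteratedDerivWithin_succ']
    simp [hg2def, hg1def]
  -- the ODE rewritten
  have hode' : ∀ x ∈ s, g2 x = ((β x : ℂ) - w * (α x : ℂ) ^ 2) * g x := by
    intro x hx
    have h := hode x hx
    rw [hiter x hx] at h
    linear_combination -h
  -- derivatives at interior points
  have hgderiv : ∀ x ∈ Ioo (-1 : ℝ) 1, HasDerivAt g (g1 x) x := by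
    intro x hx
    have hmem : s ∈ nhds x := Icc_mem_nhds hx.1 hx.2
    exact ((hgdiffOn x (Ioo_subset_Icc_self hx)).hasDerivWithinAt).hasDerivAt hmem
  have hg1deriv : ∀ x ∈ Ioo (-1 : ℝ) 1, HasDerivAt g1 (g2 x) x := by
    intro x hx
    have hmem : s ∈ nhds x := Icc_mem_nhds hx.1 hx.2
    exact ((hg1diffOn x (Ioo_subset_Icc_self hx)).hasDerivWithinAt).hasDerivAt hmem
  -- the function F = conj g * g1 and its derivative
  set F : ℝ → ℂ := fun x => (starRingEnd ℂ) (g x) * g1 x with hFdef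
  set F' : ℝ → ℂ := fun x => (starRingEnd ℂ) (g1 x) * g1 x
      + (starRingEnd ℂ) (g x) * g2 x with hF'def
  have hFcont : ContinuousOn F s :=
    ((Complex.continuous_conj.comp_continuousOn hgcont).mul hg1cont)
  have hF'deriv : ∀ x ∈ Ioo (-1 : ℝ) 1, HasDerivWithinAt F (F' x) (Ioi x) x := by
    intro x hx
    have h1 : HasDerivAt (fun y => (starRingEnd ℂ) (g y)) ((starRingEnd ℂ) (g1 x)) x :=
      (hgderiv x hx).star
    exact ((h1.mul (hg1deriv x hx)).congr_deriv (by ring)).hasDerivWithinAt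
  have hF'cont : ContinuousOn F' s := by
    apply ContinuousOn.add
    · exact (Complex.continuous_conj.comp_continuousOn hg1cont).mul hg1cont
    · exact (Complex.continuous_conj.comp_continuousOn hgcont).mul hg2cont
  have hF'int : IntervalIntegrable F' MeasureTheory.volume (-1) 1 :=
    (hF'cont.mono (by rw [huicc])).intervalIntegrable
  have hFTC : ∫ x in (-1 : ℝ)..1, F' x = 0 := by
    rw [intervalIntegral.integral_eq_sub_of_hasDeriv_right_of_le h11.le hFcont hF'deriv hF'int]
    simp [hFdef, hgm, hgp]
  -- real integrands
  set f : ℝ → ℝ := fun x => ‖g1 x‖ ^ 2 + β x * ‖g x‖ ^ 2 with hfdef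
  set h : ℝ → ℝ := fun x => α x ^ 2 * ‖g x‖ ^ 2 with hhdef
  have hfcont : ContinuousOn f s := by
    apply ContinuousOn.add
    · exact (hg1cont.norm.pow 2)
    · exact hβ.mul (hgcont.norm.pow 2)
  have hhcont : ContinuousOn h s := (hα.pow 2).mul (hgcont.norm.pow 2)
  have hfint : IntervalIntegrable f MeasureTheory.volume (-1) 1 :=
    (hfcont.mono (by rw [huicc])).intervalIntegrable
  have hhint : IntervalIntegrable h MeasureTheory.volume (-1) 1 :=
    (hhcont.mono (by rw [huicc])).intervalIntegrable
  -- rewrite integrand of F'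
  have hF'eq : ∀ x ∈ s, F' x = (f x : ℂ) - w * (h x : ℂ) := by
    intro x hx
    have h2 := hode' x hx
    have hcg : (starRingEnd ℂ) (g x) * g x = ((‖g x‖ ^ 2 : ℝ) : ℂ) := by
      rw [RCLike.conj_mul (g x)]; norm_cast
    have hcg1 : (starRingEnd ℂ) (g1 x) * g1 x = ((‖g1 x‖ ^ 2 : ℝ) : ℂ) := by
      rw [RCLike.conj_mul (g1 x)]; norm_cast
    simp only [hF'def, hfdef, hhdef, h2]
    rw [show (starRingEnd ℂ) (g x) * (((β x : ℂ) - w * (α x : ℂ) ^ 2) * g x)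
        = ((β x : ℂ) - w * (α x : ℂ) ^ 2) * ((starRingEnd ℂ) (g x) * g x) from by ring,
      hcg, hcg1]
    push_cast
    ring
  have hkey : (↑(∫ x in (-1 : ℝ)..1, f x) : ℂ) - w * ↑(∫ x in (-1 : ℝ)..1, h x) = 0 := by
    have : ∫ x in (-1 : ℝ)..1, F' x
        = ∫ x in (-1 : ℝ)..1, ((f x : ℂ) - w * (h x : ℂ)) := by
      apply intervalIntegral.integral_congr
      intro x hx
      exact hF'eq x (by rwa [huicc] at hx)
    rw [this] at hFTC
    rw [intervalIntegral.integral_sub, intervalIntegral.integral_const_mul,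
      intervalIntegral.integral_ofReal, intervalIntegral.integral_ofReal] at hFTC
    · exact hFTC
    · exact ((Complex.continuous_ofReal.comp_continuousOn hfcont).mono
        (by rw [huicc])).intervalIntegrable
    · exact (((Complex.continuous_ofReal.comp_continuousOn hhcont).mono
        (by rw [huicc])).intervalIntegrable).const_mul w
  set I1 := ∫ x in (-1 : ℝ)..1, f x with hI1
  set I2 := ∫ x in (-1 : ℝ)..1, h x with hI2
  obtain ⟨x0, hx0s, hx0⟩ := hg0
  have hI2pos : 0 < I2 := by
    apply intervalIntegral.integral_pos h11 hhcont
    · intro x hx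
      simp only [hhdef]
      positivity
    · refine ⟨x0, hx0s, ?_⟩
      have h1 : α x0 ≠ 0 := hα0 x0 hx0s
      have h2 : ‖g x0‖ ≠ 0 := norm_ne_zero_iff.mpr hx0
      simp only [hhdef]
      positivity
  have hfnonneg : ∀ x ∈ s, 0 ≤ f x := by
    intro x hx
    have hb := hβ0 x hx
    simp only [hfdef]
    positivity
  have hI1pos : 0 < I1 := by
    by_contra hc
    push_neg at hc
    have hfzero : ∀ x ∈ s, f x = 0 := by
      intro x hx
      by_contra hfx
      have hfxpos : 0 < f x := lt_of_le_of_ne (hfnonneg x hx) (Ne.symm hfx)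
      have hpos : 0 < I1 := intervalIntegral.integral_pos h11 hfcont
        (fun y hy => hfnonneg y ⟨hy.1.le, hy.2⟩) ⟨x, hx, hfxpos⟩
      exact absurd hpos (not_lt.mpr hc)
    have hg1zero : ∀ x ∈ s, derivWithin g s x = 0 := by
      intro x hx
      have hf0 := hfzero x hx
      have hb : 0 ≤ β x * ‖g x‖ ^ 2 := mul_nonneg (hβ0 x hx) (by positivity)
      have hsq : ‖g1 x‖ ^ 2 = 0 := by
        simp only [hfdef] at hf0
        nlinarith [sq_nonneg ‖g1 x‖]
      have : ‖g1 x‖ = 0 := by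
        have := pow_eq_zero_iff (n := 2) (by norm_num) |>.mp hsq
        exact this
      simpa [hg1def] using norm_eq_zero.mp this
    have hconst := constant_of_derivWithin_zero hgdiffOn
      (fun x hx => hg1zero x ⟨hx.1, hx.2.le⟩)
    exact hx0 ((hconst x0 hx0s).trans hgm)
  have hre := congrArg Complex.re hkey
  simp only [Complex.sub_re, Complex.mul_re, Complex.ofReal_re, Complex.ofReal_im,
    mul_zero, sub_zero, Complex.zero_re] at hre
  have hwre : w.re = I1 / I2 := by
    field_simp
    linarith
  rw [hwre]
  exact div_pos hI1pos hI2pos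
end

section
/- The set Σ₀ is infinite. -/
open Set

/-- `Σ₀`: the set of `w ∈ ℂ` for which the Dirichlet problem
`-g'' - w·α²·g + β·g = 0` on `[-1,1]`, `g(±1) = 0`, has a nontrivial twice continuously
differentiable solution. -/
def Sigma0 (α β : ℝ → ℝ) : Set ℂ :=
  {w : ℂ | ∃ g : ℝ → ℂ,
    ContDiffOn ℝ 2 g (Icc (-1) 1) ∧
    (∃ x ∈ Icc (-1 : ℝ) 1, g x ≠ 0) ∧
    g (-1) = 0 ∧ g 1 = 0 ∧
    ∀ x ∈ Icc (-1 : ℝ) 1,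
      -(iteratedDerivWithin 2 g (Icc (-1) 1) x) - w * ((α x : ℂ)) ^ 2 * g x
        + (β x : ℂ) * g x = 0}

namespace SL

open Real

noncomputable section

def qf (A B : ℝ → ℝ) (w t : ℝ) : ℝ := w * A t ^ 2 - B t

def Vf (A B : ℝ → ℝ) (w t y : ℝ) : ℝ := cos y ^ 2 + qf A B w t * sin y ^ 2

def Psi (c y : ℝ) : ℝ := ∫ t in (0:ℝ)..y, (cos t ^ 2 + c * sin t ^ 2)⁻¹

variable {A B : ℝ → ℝ} {c : ℝ}

lemma abs_qf_le {MA MB : ℝ} (hMA : ∀ t, |A t| ≤ MA) (hMB : ∀ t, |B t| ≤ MB) (w t : ℝ) :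
    |qf A B w t| ≤ |w| * MA ^ 2 + MB := by
  have h1 : |A t| ^ 2 ≤ MA ^ 2 := pow_le_pow_left₀ (abs_nonneg _) (hMA t) 2
  calc |qf A B w t| ≤ |w * A t ^ 2| + |B t| := by
        unfold qf; rw [sub_eq_add_neg]; simpa only [abs_neg] using abs_add_le (w * A t ^ 2) (-B t)
    _ ≤ |w| * MA ^ 2 + MB := by
        rw [abs_mul, abs_pow]
        exact add_le_add (mul_le_mul_of_nonneg_left h1 (abs_nonneg w)) (hMB t)

lemma qf_cont (hA : Continuous A) (hB : Continuous B) (w : ℝ) :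
    Continuous (qf A B w) := by
  unfold qf; fun_prop

lemma hasDerivAt_Vf (w t y : ℝ) :
    HasDerivAt (Vf A B w t) ((qf A B w t - 1) * (2 * sin y * cos y)) y := by
  have h1 : HasDerivAt (fun y : ℝ => cos y ^ 2) (2 * cos y ^ 1 * -sin y) y :=
    (Real.hasDerivAt_cos y).pow 2
  have h2 : HasDerivAt (fun y : ℝ => sin y ^ 2) (2 * sin y ^ 1 * cos y) y :=
    (Real.hasDerivAt_sin y).pow 2
  refine (h1.add (h2.const_mul (qf A B w t))).congr_deriv ?_
  ring

lemma lipschitz_Vf {Q : ℝ} (w t : ℝ) (hq : |qf A B w t| ≤ Q) :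
    LipschitzWith (2 + 2 * Q).toNNReal (Vf A B w t) := by
  have hQ0 : 0 ≤ Q := (abs_nonneg _).trans hq
  apply lipschitzWith_of_nnnorm_deriv_le
  · exact fun y => (hasDerivAt_Vf w t y).differentiableAt
  · intro y
    rw [(hasDerivAt_Vf w t y).deriv, ← NNReal.coe_le_coe, coe_nnnorm, Real.norm_eq_abs,
      Real.coe_toNNReal _ (by positivity)]
    have h1 : |qf A B w t - 1| ≤ Q + 1 := by
      calc |qf A B w t - 1| ≤ |qf A B w t| + |1| := by
            rw [sub_eq_add_neg]; simpa only [abs_neg] using abs_add_le (qf A B w t) (-1)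
        _ ≤ Q + 1 := by simp [hq]
    have h2 : |2 * sin y * cos y| ≤ 2 := by
      rw [abs_mul, abs_mul, abs_two]
      nlinarith [abs_sin_le_one y, abs_cos_le_one y, abs_nonneg (sin y), abs_nonneg (cos y)]
    calc |(qf A B w t - 1) * (2 * sin y * cos y)| = |qf A B w t - 1| * |2 * sin y * cos y| :=
          abs_mul _ _
      _ ≤ (Q + 1) * 2 := mul_le_mul h1 h2 (abs_nonneg _) (by positivity)
      _ = 2 + 2 * Q := by ring

lemma abs_Vf_le {Q : ℝ} (w t y : ℝ) (hq : |qf A B w t| ≤ Q) : |Vf A B w t y| ≤ 1 + Q := by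
  have h1 := abs_le.1 hq
  have h2 := sin_sq_add_cos_sq y
  have h3 := sq_nonneg (sin y)
  have h4 := sq_nonneg (cos y)
  have h5 : sin y ^ 2 ≤ 1 := by nlinarith
  have h6 : cos y ^ 2 ≤ 1 := by nlinarith
  rw [abs_le]
  constructor <;> unfold Vf <;> nlinarith [mul_le_mul_of_nonneg_right h1.2 h3,
    mul_le_mul_of_nonneg_right (neg_le_of_neg_le h1.1) h3]

/-- Global existence of the Prüfer angle on `[-1,1]`. -/
lemma exists_theta (hA : Continuous A) (hB : Continuous B)
    {MA MB : ℝ} (hMA : ∀ t, |A t| ≤ MA) (hMB : ∀ t, |B t| ≤ MB) (w : ℝ) :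
    ∃ θ : ℝ → ℝ, θ (-1) = 0 ∧
      ∀ t ∈ Icc (-1 : ℝ) 1, HasDerivWithinAt θ (Vf A B w t (θ t)) (Icc (-1) 1) t := by
  have hMA0 : 0 ≤ MA := (abs_nonneg _).trans (hMA 0)
  have hMB0 : 0 ≤ MB := (abs_nonneg _).trans (hMB 0)
  set Q : ℝ := |w| * MA ^ 2 + MB with hQ
  have hQ0 : 0 ≤ Q := by positivity
  have hq : ∀ t, |qf A B w t| ≤ Q := abs_qf_le hMA hMB w
  have hpl : IsPicardLindelof (Vf A B w) (tmin := -1) (tmax := 1) ⟨-1, by norm_num⟩ (0 : ℝ)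
      (2 * (1 + Q)).toNNReal 0 (1 + Q).toNNReal (2 + 2 * Q).toNNReal := by
    constructor
    · intro t _
      exact (lipschitz_Vf w t (hq t)).lipschitzOnWith
    · intro y _
      apply Continuous.continuousOn
      unfold Vf
      exact continuous_const.add ((qf_cont hA hB w).mul continuous_const)
    · intro t _ y _
      rw [Real.norm_eq_abs, Real.coe_toNNReal _ (by positivity)]
      exact abs_Vf_le w t y (hq t)
    · rw [show max (1 - (-1) : ℝ) ((-1) - (-1)) = 2 by norm_num]
      simp only [Real.coe_toNNReal _ (by positivity : (0:ℝ) ≤ 1 + Q), NNReal.coe_zero, tsub_zero,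
        Real.coe_toNNReal _ (by positivity : (0:ℝ) ≤ 2 * (1 + Q))]
      linarith
  obtain ⟨θ, hθ0, hθ'⟩ := hpl.exists_eq_forall_mem_Icc_hasDerivWithinAt₀
  exact ⟨θ, hθ0, hθ'⟩

/-- Continuity in the spectral parameter of the Prüfer angle at the endpoint. -/
lemma cont_theta (hA : Continuous A) (hB : Continuous B)
    {MA MB : ℝ} (hMA : ∀ t, |A t| ≤ MA) (hMB : ∀ t, |B t| ≤ MB)
    (Θ : ℝ → ℝ → ℝ) (hΘ0 : ∀ w, Θ w (-1) = 0)
    (hΘ' : ∀ w, ∀ t ∈ Icc (-1 : ℝ) 1,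
      HasDerivWithinAt (Θ w) (Vf A B w t (Θ w t)) (Icc (-1) 1) t) :
    Continuous fun w => Θ w 1 := by
  have hMA0 : 0 ≤ MA := (abs_nonneg _).trans (hMA 0)
  rw [continuous_iff_continuousAt]
  intro w₀
  set Q : ℝ := |w₀| * MA ^ 2 + MB with hQdef
  set K : NNReal := (2 + 2 * Q).toNNReal with hK
  -- basic facts about solutions
  have hcont : ∀ w, ContinuousOn (Θ w) (Icc (-1 : ℝ) 1) := fun w t ht =>
    (hΘ' w t ht).continuousWithinAt
  have hIci : ∀ w, ∀ t ∈ Ico (-1 : ℝ) 1,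
      HasDerivWithinAt (Θ w) (Vf A B w t (Θ w t)) (Ici t) t := by
    intro w t ht
    exact (hΘ' w t (Ico_subset_Icc_self ht)).mono_of_mem_nhdsWithin
      (Icc_mem_nhdsGE_of_mem ht)
  -- the Gronwall estimate
  have key : ∀ w : ℝ, dist (Θ w₀ 1) (Θ w 1) ≤
      gronwallBound 0 K (0 + |w - w₀| * MA ^ 2) (1 - (-1)) := by
    intro w
    have hv : ∀ t, LipschitzWith K (Vf A B w₀ t) :=
      fun t => lipschitz_Vf w₀ t (abs_qf_le hMA hMB w₀ t)
    refine dist_le_of_approx_trajectories_ODE hv (hcont w₀) (hIci w₀)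
      (fun t ht => by simp) (hcont w) (hIci w) (fun t ht => ?_) (by simp [hΘ0]) 1
      (by norm_num)
    have heq : Vf A B w t (Θ w t) - Vf A B w₀ t (Θ w t)
        = (w - w₀) * A t ^ 2 * sin (Θ w t) ^ 2 := by
      unfold Vf qf; ring
    rw [Real.dist_eq, heq]
    have h1 : |A t| ^ 2 ≤ MA ^ 2 := pow_le_pow_left₀ (abs_nonneg _) (hMA t) 2
    rw [abs_mul, abs_mul]
    calc |w - w₀| * |A t ^ 2| * |sin (Θ w t) ^ 2|
        ≤ |w - w₀| * MA ^ 2 * 1 := by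
          apply mul_le_mul (mul_le_mul le_rfl (by rwa [abs_pow]) (abs_nonneg _) (abs_nonneg _))
            (by rw [abs_pow]; exact pow_le_one₀ (abs_nonneg _) (abs_sin_le_one _))
            (abs_nonneg _) (by positivity)
      _ = |w - w₀| * MA ^ 2 := mul_one _
  -- conclude continuity
  rw [ContinuousAt, tendsto_iff_dist_tendsto_zero]
  have key' : ∀ w, dist (Θ w 1) (Θ w₀ 1) ≤
      gronwallBound 0 K (0 + |w - w₀| * MA ^ 2) (1 - (-1)) :=
    fun w => by rw [dist_comm]; exact key w
  have hcε : Continuous fun w : ℝ => gronwallBound 0 (K : ℝ) (0 + |w - w₀| * MA ^ 2) (1 - (-1)) := by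
    apply (gronwallBound_continuous_ε 0 K (1 - (-1))).comp
    fun_prop
  have h0 : gronwallBound 0 (K : ℝ) (0 + |w₀ - w₀| * MA ^ 2) (1 - (-1)) = 0 := by
    simp [gronwallBound_ε0_δ0]
  have hg0 := hcε.tendsto w₀
  rw [h0] at hg0
  exact squeeze_zero (fun w => dist_nonneg) key' hg0
lemma denom_pos (hc : 0 < c) (t : ℝ) : 0 < cos t ^ 2 + c * sin t ^ 2 := by
  nlinarith [sin_sq_add_cos_sq t, sq_nonneg (sin t), sq_nonneg (cos t),
    mul_nonneg hc.le (sq_nonneg (sin t)), mul_pos hc (mul_pos hc hc)]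

lemma cont_integrand (hc : 0 < c) :
    Continuous fun t : ℝ => (cos t ^ 2 + c * sin t ^ 2)⁻¹ :=
  Continuous.inv₀ (by fun_prop) fun t => (denom_pos hc t).ne'

lemma hasDerivAt_Psi (hc : 0 < c) (y : ℝ) :
    HasDerivAt (Psi c) ((cos y ^ 2 + c * sin y ^ 2)⁻¹) y :=
  ((cont_integrand hc).integral_hasStrictDerivAt 0 y).hasDerivAt

lemma Psi_strictMono (hc : 0 < c) : StrictMono (Psi c) :=
  strictMono_of_deriv_pos fun y => by
    rw [(hasDerivAt_Psi hc y).deriv]; exact inv_pos.2 (denom_pos hc y)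

lemma Psi_zero : Psi c 0 = 0 := intervalIntegral.integral_same

lemma Psi_nat_mul (hc : 0 < c) (N : ℕ) : Psi c (N * π) = N * Psi c π := by
  have hper : Function.Periodic (fun t : ℝ => (cos t ^ 2 + c * sin t ^ 2)⁻¹) π := by
    intro t
    simp only [cos_add, sin_add, Real.cos_pi, Real.sin_pi]
    ring_nf
  have h := hper.intervalIntegral_add_zsmul_eq (N : ℤ) 0
    fun t₁ t₂ => (cont_integrand hc).intervalIntegrable t₁ t₂
  simpa [Psi, zsmul_eq_mul] using h

lemma Psi_pi_small {ε : ℝ} (hε : 0 < ε) :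
    ∃ c₀ : ℝ, 1 ≤ c₀ ∧ ∀ c : ℝ, c₀ ≤ c → Psi c π ≤ ε := by
  set δ : ℝ := min (π / 4) (ε / 8) with hδdef
  have hδ0 : 0 < δ := lt_min (by positivity) (by positivity)
  have hδπ4 : δ ≤ π / 4 := min_le_left _ _
  have hδε : δ ≤ ε / 8 := min_le_right _ _
  have hδπ : δ ≤ π := hδπ4.trans (by linarith [pi_pos])
  have hδ2 : δ ≤ π / 2 := hδπ4.trans (by linarith [pi_pos])
  have hsδ : 0 < sin δ := sin_pos_of_pos_of_lt_pi hδ0 (lt_of_le_of_lt hδπ4 (by linarith [pi_pos]))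
  have hcδ0 : 0 ≤ cos δ := cos_nonneg_of_mem_Icc ⟨by linarith, hδ2⟩
  have h12 : (1 / 2 : ℝ) ≤ cos δ ^ 2 := by
    have h1 : cos (π / 4) ≤ cos δ := cos_le_cos_of_nonneg_of_le_pi hδ0.le (by linarith [pi_pos]) hδπ4
    rw [Real.cos_pi_div_four] at h1
    nlinarith [Real.sq_sqrt (by norm_num : (2:ℝ) ≥ 0), Real.sqrt_nonneg 2]
  refine ⟨max 1 (2 * π / (ε * sin δ ^ 2)), le_max_left _ _, fun c hc => ?_⟩
  have hc1 : (1 : ℝ) ≤ c := le_trans (le_max_left _ _) hc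
  have hc0 : (0 : ℝ) < c := by linarith
  have hcc : 2 * π / (ε * sin δ ^ 2) ≤ c := le_trans (le_max_right _ _) hc
  have hc2π : 2 * π ≤ c * (ε * sin δ ^ 2) := by
    rw [div_le_iff₀ (by positivity)] at hcc
    linarith
  have hint : ∀ a b : ℝ, IntervalIntegrable (fun t : ℝ => (cos t ^ 2 + c * sin t ^ 2)⁻¹)
      MeasureTheory.volume a b := fun a b => (cont_integrand hc0).intervalIntegrable a b
  -- split the integral
  have hsplit : Psi c π = (∫ t in (0:ℝ)..δ, (cos t ^ 2 + c * sin t ^ 2)⁻¹)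
      + (∫ t in δ..(π - δ), (cos t ^ 2 + c * sin t ^ 2)⁻¹)
      + (∫ t in (π - δ)..π, (cos t ^ 2 + c * sin t ^ 2)⁻¹) := by
    rw [intervalIntegral.integral_add_adjacent_intervals (hint 0 δ) (hint δ (π - δ)),
      intervalIntegral.integral_add_adjacent_intervals (hint 0 (π - δ)) (hint (π - δ) π)]
    rfl
  have hI1 : (∫ t in (0:ℝ)..δ, (cos t ^ 2 + c * sin t ^ 2)⁻¹) ≤ δ * 2 := by
    have hmono : ∀ t ∈ Icc (0:ℝ) δ, (cos t ^ 2 + c * sin t ^ 2)⁻¹ ≤ 2 := by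
      intro t ⟨ht0, htδ⟩
      have h1 : cos δ ≤ cos t := cos_le_cos_of_nonneg_of_le_pi ht0 hδπ htδ
      have h2 : (1 / 2 : ℝ) ≤ cos t ^ 2 + c * sin t ^ 2 := by
        nlinarith [mul_nonneg hc0.le (sq_nonneg (sin t))]
      calc (cos t ^ 2 + c * sin t ^ 2)⁻¹ ≤ ((1:ℝ)/2)⁻¹ := by
            apply inv_anti₀ (by norm_num) h2
        _ = 2 := by norm_num
    calc (∫ t in (0:ℝ)..δ, (cos t ^ 2 + c * sin t ^ 2)⁻¹)
        ≤ ∫ _ in (0:ℝ)..δ, (2:ℝ) :=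
          intervalIntegral.integral_mono_on hδ0.le (hint 0 δ)
            intervalIntegrable_const hmono
      _ = δ * 2 := by simp
  have hI3 : (∫ t in (π - δ)..π, (cos t ^ 2 + c * sin t ^ 2)⁻¹) ≤ δ * 2 := by
    have hmono : ∀ t ∈ Icc (π - δ) π, (cos t ^ 2 + c * sin t ^ 2)⁻¹ ≤ 2 := by
      intro t ⟨ht0, htδ⟩
      have h1 : cos δ ≤ cos (π - t) :=
        cos_le_cos_of_nonneg_of_le_pi (by linarith) hδπ (by linarith)
      rw [Real.cos_pi_sub] at h1
      have h2 : (1 / 2 : ℝ) ≤ cos t ^ 2 + c * sin t ^ 2 := by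
        nlinarith [mul_nonneg hc0.le (sq_nonneg (sin t))]
      calc (cos t ^ 2 + c * sin t ^ 2)⁻¹ ≤ ((1:ℝ)/2)⁻¹ := by
            apply inv_anti₀ (by norm_num) h2
        _ = 2 := by norm_num
    calc (∫ t in (π - δ)..π, (cos t ^ 2 + c * sin t ^ 2)⁻¹)
        ≤ ∫ _ in (π - δ)..π, (2:ℝ) :=
          intervalIntegral.integral_mono_on (by linarith) (hint _ _)
            intervalIntegrable_const hmono
      _ = δ * 2 := by rw [intervalIntegral.integral_const, smul_eq_mul]; ring
  have hI2 : (∫ t in δ..(π - δ), (cos t ^ 2 + c * sin t ^ 2)⁻¹) ≤ ε / 2 := by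
    have hmono : ∀ t ∈ Icc δ (π - δ), (cos t ^ 2 + c * sin t ^ 2)⁻¹ ≤ (c * sin δ ^ 2)⁻¹ := by
      intro t ⟨ht1, ht2⟩
      have hsin : sin δ ≤ sin t := by
        rcases le_total t (π / 2) with h | h
        · exact strictMonoOn_sin.monotoneOn ⟨by linarith, hδ2⟩ ⟨by linarith, h⟩ ht1
        · rw [← Real.sin_pi_sub t]
          exact strictMonoOn_sin.monotoneOn ⟨by linarith, hδ2⟩ ⟨by linarith, by linarith⟩
            (by linarith)
      apply inv_anti₀ (by positivity)
      nlinarith [sq_nonneg (cos t), mul_le_mul_of_nonneg_left (pow_le_pow_left₀ hsδ.le hsin 2) hc0.le]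
    calc (∫ t in δ..(π - δ), (cos t ^ 2 + c * sin t ^ 2)⁻¹)
        ≤ ∫ _ in δ..(π - δ), (c * sin δ ^ 2)⁻¹ :=
          intervalIntegral.integral_mono_on (by linarith [pi_pos]) (hint _ _)
            intervalIntegrable_const hmono
      _ = (π - 2 * δ) * (c * sin δ ^ 2)⁻¹ := by
          rw [intervalIntegral.integral_const, smul_eq_mul]; ring_nf
      _ ≤ π * (c * sin δ ^ 2)⁻¹ := by
          apply mul_le_mul_of_nonneg_right (by linarith) (by positivity)
      _ ≤ ε / 2 := by
          rw [mul_inv_le_iff₀ (by positivity)]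
          nlinarith [pi_pos]
  have hδε4 : δ * 2 ≤ ε / 4 := by linarith
  linarith [hsplit, hI1, hI2, hI3]
/-- Comparison step: if `q ≥ c` along the interval then `Ψ_c (θ 1) ≥ 2`. -/
lemma two_le_Psi {w : ℝ} (hc : 1 ≤ c) (hq : ∀ t, c ≤ qf A B w t)
    {θ : ℝ → ℝ} (hθ0 : θ (-1) = 0)
    (hθ' : ∀ t ∈ Icc (-1:ℝ) 1, HasDerivWithinAt θ (Vf A B w t (θ t)) (Icc (-1) 1) t) :
    2 ≤ Psi c (θ 1) := by
  have hc0 : 0 < c := by linarith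
  set η : ℝ → ℝ := fun x => Psi c (θ x) - x with hηdef
  have hPsiC : Continuous (Psi c) :=
    (Differentiable.continuous fun y => (hasDerivAt_Psi hc0 y).differentiableAt)
  have hθc : ContinuousOn θ (Icc (-1:ℝ) 1) := fun t ht => (hθ' t ht).continuousWithinAt
  have hηc : ContinuousOn η (Icc (-1:ℝ) 1) :=
    ((hPsiC.comp_continuousOn hθc).sub continuousOn_id)
  have hη' : ∀ x ∈ Ioo (-1:ℝ) 1, HasDerivAt η
      ((cos (θ x) ^ 2 + c * sin (θ x) ^ 2)⁻¹ * Vf A B w x (θ x) - 1) x := by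
    intro x hx
    have hx' : HasDerivAt θ (Vf A B w x (θ x)) x :=
      (hθ' x (Ioo_subset_Icc_self hx)).hasDerivAt (Icc_mem_nhds hx.1 hx.2)
    exact ((hasDerivAt_Psi hc0 (θ x)).comp x hx').sub (hasDerivAt_id x)
  have hη'pos : ∀ x ∈ Ioo (-1:ℝ) 1,
      0 ≤ (cos (θ x) ^ 2 + c * sin (θ x) ^ 2)⁻¹ * Vf A B w x (θ x) - 1 := by
    intro x _
    have hd := denom_pos hc0 (θ x)
    have h1 : cos (θ x) ^ 2 + c * sin (θ x) ^ 2 ≤ Vf A B w x (θ x) := by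
      unfold Vf
      nlinarith [mul_le_mul_of_nonneg_right (hq x) (sq_nonneg (sin (θ x)))]
    have h2 := mul_le_mul_of_nonneg_left h1 (inv_nonneg.2 hd.le)
    rw [inv_mul_cancel₀ hd.ne'] at h2
    linarith
  have hmono : MonotoneOn η (Icc (-1:ℝ) 1) := by
    apply monotoneOn_of_deriv_nonneg (convex_Icc _ _) hηc
    · rw [interior_Icc]
      exact fun x hx => (hη' x hx).differentiableAt.differentiableWithinAt
    · rw [interior_Icc]
      intro x hx
      rw [(hη' x hx).deriv]
      exact hη'pos x hx
  have h := hmono (left_mem_Icc.2 (by norm_num)) (right_mem_Icc.2 (by norm_num)) (by norm_num)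
  simp only [hηdef, hθ0, Psi_zero] at h
  linarith

/-- The Prüfer angle at `t = 1` grows without bound as `w → ∞`. -/
lemma theta_growth {MB m : ℝ} (hMB : ∀ t, |B t| ≤ MB) (hm0 : 0 < m) (hm : ∀ t, m ≤ A t ^ 2)
    (Θ : ℝ → ℝ → ℝ) (hΘ0 : ∀ w, Θ w (-1) = 0)
    (hΘ' : ∀ w, ∀ t ∈ Icc (-1 : ℝ) 1,
      HasDerivWithinAt (Θ w) (Vf A B w t (Θ w t)) (Icc (-1) 1) t)
    (N : ℕ) : ∃ w₁ : ℝ, ∀ w, w₁ ≤ w → (N : ℝ) * π ≤ Θ w 1 := by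
  have hMB0 : 0 ≤ MB := (abs_nonneg _).trans (hMB 0)
  obtain ⟨c₀, hc₀1, hc₀⟩ := Psi_pi_small (ε := 1/(N+1)) (by positivity)
  have hc₀0 : 0 < c₀ := by linarith
  refine ⟨(c₀ + MB) / m, fun w hw => ?_⟩
  have hw0 : 0 ≤ w := le_trans (by positivity) hw
  have hqc : ∀ t, c₀ ≤ qf A B w t := by
    intro t
    unfold qf
    have h1 : w * m ≤ w * A t ^ 2 := mul_le_mul_of_nonneg_left (hm t) hw0
    have h2 : c₀ + MB ≤ w * m := by
      rw [div_le_iff₀ hm0] at hw; linarith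
    have h3 : B t ≤ MB := le_of_abs_le (hMB t)
    linarith
  have h2Psi := two_le_Psi hc₀1 hqc (hΘ0 w) (hΘ' w)
  by_contra hlt
  push_neg at hlt
  have hle : Psi c₀ (Θ w 1) ≤ Psi c₀ (N * π) := (Psi_strictMono hc₀0).monotone hlt.le
  rw [Psi_nat_mul hc₀0 N] at hle
  have hPsiπ : Psi c₀ π ≤ 1 / (N + 1) := hc₀ c₀ le_rfl
  have hPsiπ0 : 0 ≤ Psi c₀ π := by
    have := (Psi_strictMono hc₀0).monotone pi_pos.le
    rwa [Psi_zero] at this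
  have hN : (N : ℝ) * Psi c₀ π < 1 := by
    calc (N : ℝ) * Psi c₀ π ≤ (N : ℝ) * (1 / (N + 1)) :=
          mul_le_mul_of_nonneg_left hPsiπ (Nat.cast_nonneg N)
      _ < 1 := by
          rw [mul_one_div, div_lt_one (by positivity)]
          linarith
  linarith
lemma ofReal_hasDerivWithinAt {f : ℝ → ℝ} {f' : ℝ} {s : Set ℝ} {x : ℝ}
    (h : HasDerivWithinAt f f' s x) :
    HasDerivWithinAt (fun y => ((f y : ℝ) : ℂ)) (f' : ℂ) s x := by
  have h2 : HasDerivAt (fun r : ℝ => (r : ℂ)) 1 (f x) := by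
    exact (hasDerivAt_id (f x)).ofReal_comp
  exact h.ofReal_comp

/-- Construction of the eigenfunction from a Prüfer angle hitting `kπ` at `t = 1`. -/
lemma mem_sigma0 (hA : Continuous A) (hB : Continuous B)
    {w : ℝ} {θ : ℝ → ℝ} (hθ0 : θ (-1) = 0)
    (hθ' : ∀ t ∈ Icc (-1:ℝ) 1, HasDerivWithinAt θ (Vf A B w t (θ t)) (Icc (-1) 1) t)
    {k : ℕ} (hk : 1 ≤ k) (hθ1 : θ 1 = k * π) :
    ((w : ℝ) : ℂ) ∈ Sigma0 A B := by
  have hle : (-1:ℝ) ≤ 1 := by norm_num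
  have hUD : UniqueDiffOn ℝ (Icc (-1:ℝ) 1) := uniqueDiffOn_Icc (by norm_num)
  set θe : ℝ → ℝ := fun x => θ ↑(projIcc (-1) 1 hle x) with hθedef
  have hθe_eq : ∀ x ∈ Icc (-1:ℝ) 1, θe x = θ x := fun x hx => by
    simp only [hθedef, projIcc_of_mem hle hx]
  have hθc : ContinuousOn θ (Icc (-1:ℝ) 1) := fun t ht => (hθ' t ht).continuousWithinAt
  have hθec : Continuous θe := hθc.comp_continuous
    (continuous_subtype_val.comp (continuous_projIcc)) (fun x => (projIcc (-1) 1 hle x).2)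
  have hθe' : ∀ t ∈ Icc (-1:ℝ) 1,
      HasDerivWithinAt θe (Vf A B w t (θe t)) (Icc (-1) 1) t := by
    intro t ht
    rw [hθe_eq t ht]
    exact (hθ' t ht).congr (fun y hy => hθe_eq y hy) (hθe_eq t ht)
  -- the radial part
  set ρ : ℝ → ℝ := fun x => ∫ s in (-1:ℝ)..x,
    (1 - qf A B w s) * (sin (θe s) * cos (θe s)) with hρdef
  have hρint : Continuous fun s : ℝ => (1 - qf A B w s) * (sin (θe s) * cos (θe s)) :=
    (continuous_const.sub (qf_cont hA hB w)).mul
      ((continuous_sin.comp hθec).mul (continuous_cos.comp hθec))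
  have hρ' : ∀ x : ℝ, HasDerivAt ρ ((1 - qf A B w x) * (sin (θe x) * cos (θe x))) x :=
    fun x => (hρint.integral_hasStrictDerivAt (-1) x).hasDerivAt
  have hρc : Continuous ρ := by
    apply continuous_iff_continuousAt.2 fun x => (hρ' x).continuousAt
  set u : ℝ → ℝ := fun x => exp (ρ x) * sin (θe x) with hudef
  set u1 : ℝ → ℝ := fun x => exp (ρ x) * cos (θe x) with hu1def
  have hucont : Continuous u := (Real.continuous_exp.comp hρc).mul (continuous_sin.comp hθec)
  have hu : ∀ x ∈ Icc (-1:ℝ) 1, HasDerivWithinAt u (u1 x) (Icc (-1) 1) x := by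
    intro x hx
    have h1 : HasDerivWithinAt (fun y => exp (ρ y))
        (exp (ρ x) * ((1 - qf A B w x) * (sin (θe x) * cos (θe x)))) (Icc (-1:ℝ) 1) x :=
      ((hρ' x).exp).hasDerivWithinAt
    have h2 : HasDerivWithinAt (fun y => sin (θe y))
        (cos (θe x) * Vf A B w x (θe x)) (Icc (-1:ℝ) 1) x :=
      (Real.hasDerivAt_sin (θe x)).comp_hasDerivWithinAt x (hθe' x hx)
    have h3 := h1.mul h2
    refine h3.congr_deriv ?_
    have hsc := sin_sq_add_cos_sq (θe x)
    simp only [hu1def, Vf]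
    linear_combination (exp (ρ x) * cos (θe x)) * hsc
  have hu1 : ∀ x ∈ Icc (-1:ℝ) 1,
      HasDerivWithinAt u1 (-(qf A B w x) * u x) (Icc (-1) 1) x := by
    intro x hx
    have h1 : HasDerivWithinAt (fun y => exp (ρ y))
        (exp (ρ x) * ((1 - qf A B w x) * (sin (θe x) * cos (θe x)))) (Icc (-1:ℝ) 1) x :=
      ((hρ' x).exp).hasDerivWithinAt
    have h2 : HasDerivWithinAt (fun y => cos (θe y))
        (-sin (θe x) * Vf A B w x (θe x)) (Icc (-1:ℝ) 1) x :=
      (Real.hasDerivAt_cos (θe x)).comp_hasDerivWithinAt x (hθe' x hx)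
    have h3 := h1.mul h2
    refine h3.congr_deriv ?_
    have hsc := sin_sq_add_cos_sq (θe x)
    simp only [hudef, Vf]
    linear_combination (-(qf A B w x * exp (ρ x) * sin (θe x))) * hsc
  -- the complex eigenfunction
  set g : ℝ → ℂ := fun x => ((u x : ℝ) : ℂ) with hgdef
  have hg' : ∀ x ∈ Icc (-1:ℝ) 1, HasDerivWithinAt g ((u1 x : ℂ)) (Icc (-1) 1) x :=
    fun x hx => ofReal_hasDerivWithinAt (hu x hx)
  have hg1' : ∀ x ∈ Icc (-1:ℝ) 1, HasDerivWithinAt (fun y => ((u1 y : ℝ) : ℂ))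
      (((-(qf A B w x) * u x : ℝ) : ℂ)) (Icc (-1) 1) x :=
    fun x hx => ofReal_hasDerivWithinAt (hu1 x hx)
  have hdg : ∀ x ∈ Icc (-1:ℝ) 1, derivWithin g (Icc (-1) 1) x = ((u1 x : ℝ) : ℂ) :=
    fun x hx => (hg' x hx).derivWithin (hUD x hx)
  have hiter : ∀ x ∈ Icc (-1:ℝ) 1,
      iteratedDerivWithin 2 g (Icc (-1) 1) x = ((-(qf A B w x) * u x : ℝ) : ℂ) := by
    intro x hx
    rw [show (2:ℕ) = 1 + 1 from rfl, iteratedDerivWithin_succ]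
    have h1 : ∀ y ∈ Icc (-1:ℝ) 1, iteratedDerivWithin 1 g (Icc (-1) 1) y = ((u1 y : ℝ) : ℂ) :=
      fun y hy => by
        rw [iteratedDerivWithin_one]
        exact (hg' y hy).derivWithin (hUD y hy)
    rw [derivWithin_congr h1 (h1 x hx)]
    exact (hg1' x hx).derivWithin (hUD x hx)
  have hCD : ContDiffOn ℝ 2 g (Icc (-1:ℝ) 1) := by
    rw [show (2 : WithTop ℕ∞) = 1 + 1 from by norm_num, contDiffOn_succ_iff_derivWithin hUD]
    refine ⟨fun x hx => (hg' x hx).differentiableWithinAt, by simp, ?_⟩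
    apply ContDiffOn.congr (f := fun y => ((u1 y : ℝ) : ℂ)) ?_ (fun x hx => hdg x hx)
    rw [show (1 : WithTop ℕ∞) = 0 + 1 from by norm_num, contDiffOn_succ_iff_derivWithin hUD]
    refine ⟨fun x hx => (hg1' x hx).differentiableWithinAt, by simp, ?_⟩
    rw [contDiffOn_zero]
    apply ContinuousOn.congr (f := fun y => ((-(qf A B w y) * u y : ℝ) : ℂ)) ?_
      (fun x hx => (hg1' x hx).derivWithin (hUD x hx))
    exact (Complex.continuous_ofReal.comp
      (((qf_cont hA hB w).neg.mul hucont))).continuousOn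
  refine ⟨g, hCD, ?_, ?_, ?_, ?_⟩
  · -- nonvanishing
    have hmem : π / 2 ∈ Icc (θe (-1)) (θe 1) := by
      rw [hθe_eq (-1) (left_mem_Icc.2 hle), hθe_eq 1 (right_mem_Icc.2 hle), hθ0, hθ1]
      constructor
      · positivity
      · have : (1:ℝ) ≤ (k:ℝ) := by exact_mod_cast hk
        nlinarith [pi_pos]
    obtain ⟨x, hxmem, hxval⟩ := intermediate_value_Icc hle hθec.continuousOn hmem
    refine ⟨x, hxmem, ?_⟩
    simp only [hgdef, hudef, hxval]
    rw [Complex.ofReal_ne_zero, Real.sin_pi_div_two]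
    positivity
  · simp only [hgdef, hudef, hθe_eq (-1) (left_mem_Icc.2 hle), hθ0, Real.sin_zero, mul_zero,
      Complex.ofReal_zero]
  · simp only [hgdef, hudef, hθe_eq 1 (right_mem_Icc.2 hle), hθ1, Real.sin_nat_mul_pi, mul_zero,
      Complex.ofReal_zero]
  · intro x hx
    rw [hiter x hx]
    simp only [hgdef, qf]
    push_cast
    ring
lemma sigma0_congr {α β A B : ℝ → ℝ} (hα : ∀ x ∈ Icc (-1:ℝ) 1, A x = α x)
    (hβ : ∀ x ∈ Icc (-1:ℝ) 1, B x = β x) : Sigma0 A B = Sigma0 α β := by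
  unfold Sigma0
  ext w
  constructor <;> rintro ⟨g, h1, h2, h3, h4, h5⟩ <;> refine ⟨g, h1, h2, h3, h4, fun x hx => ?_⟩
  · rw [← hα x hx, ← hβ x hx]; exact h5 x hx
  · rw [hα x hx, hβ x hx]; exact h5 x hx

end

end SL

open SL Real

/-- for continuous `α, β : [-1,1] → ℝ` with `α` nonvanishing, the set `Σ₀`
is infinite. -/
theorem stmt3 (α β : ℝ → ℝ)
    (hα : ContinuousOn α (Icc (-1) 1)) (hβ : ContinuousOn β (Icc (-1) 1))
    (hα0 : ∀ x ∈ Icc (-1 : ℝ) 1, α x ≠ 0) :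
    (Sigma0 α β).Infinite := by
  have hle : (-1:ℝ) ≤ 1 := by norm_num
  -- extend the coefficients to all of ℝ
  set A : ℝ → ℝ := fun x => α ↑(projIcc (-1) 1 hle x) with hAdef
  set B : ℝ → ℝ := fun x => β ↑(projIcc (-1) 1 hle x) with hBdef
  have hproj : ∀ x : ℝ, (↑(projIcc (-1) 1 hle x) : ℝ) ∈ Icc (-1:ℝ) 1 :=
    fun x => (projIcc (-1) 1 hle x).2
  have hAeq : ∀ x ∈ Icc (-1:ℝ) 1, A x = α x := fun x hx => by
    simp only [hAdef, projIcc_of_mem hle hx]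
  have hBeq : ∀ x ∈ Icc (-1:ℝ) 1, B x = β x := fun x hx => by
    simp only [hBdef, projIcc_of_mem hle hx]
  have hA : Continuous A := hα.comp_continuous
    (continuous_subtype_val.comp continuous_projIcc) hproj
  have hB : Continuous B := hβ.comp_continuous
    (continuous_subtype_val.comp continuous_projIcc) hproj
  -- bounds
  obtain ⟨MA, hMA'⟩ := isCompact_Icc.exists_bound_of_continuousOn hα
  obtain ⟨MB, hMB'⟩ := isCompact_Icc.exists_bound_of_continuousOn hβ
  have hMA : ∀ t, |A t| ≤ MA := fun t => by
    rw [hAdef]; exact (Real.norm_eq_abs _) ▸ hMA' _ (hproj t)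
  have hMB : ∀ t, |B t| ≤ MB := fun t => by
    rw [hBdef]; exact (Real.norm_eq_abs _) ▸ hMB' _ (hproj t)
  -- positive lower bound for A^2
  obtain ⟨x₀, hx₀mem, hx₀min⟩ := isCompact_Icc.exists_isMinOn (α := ℝ)
    ⟨0, by norm_num⟩ ((hα.mul hα).mono (subset_refl _) : ContinuousOn (fun x => α x * α x) _)
  set m : ℝ := α x₀ * α x₀ with hmdef
  have hm0 : 0 < m := by
    rcases (hα0 x₀ hx₀mem).lt_or_gt with h | h
    · exact mul_pos_of_neg_of_neg h h
    · exact mul_pos h h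
  have hm : ∀ t, m ≤ A t ^ 2 := fun t => by
    rw [hAdef, sq]
    exact hx₀min (hproj t)
  -- the Prüfer angle family
  choose Θ hΘ0 hΘ' using fun w : ℝ => exists_theta hA hB hMA hMB w
  set F : ℝ → ℝ := fun w => Θ w 1 with hFdef
  have hF : Continuous F := cont_theta hA hB hMA hMB Θ hΘ0 hΘ'
  -- for every large k there is an eigenvalue with F w = k π
  set k₀ : ℕ := ⌈F 0 / π⌉₊ + 1 with hk₀def
  have hF0 : ∀ k : ℕ, k₀ ≤ k → F 0 ≤ k * π := by
    intro k hk
    have h1 : F 0 / π ≤ (⌈F 0 / π⌉₊ : ℝ) := Nat.le_ceil _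
    have h2 : (⌈F 0 / π⌉₊ : ℝ) ≤ (k : ℝ) := by
      have : (k₀ : ℝ) ≤ (k : ℝ) := by exact_mod_cast hk
      have h3 : (⌈F 0 / π⌉₊ : ℝ) + 1 = (k₀ : ℝ) := by rw [hk₀def]; push_cast; ring
      linarith
    rw [div_le_iff₀ pi_pos] at h1
    nlinarith [pi_pos]
  have hexists : ∀ k : ℕ, k₀ ≤ k → ∃ w : ℝ, F w = k * π := by
    intro k hk
    obtain ⟨w₁, hw₁⟩ := theta_growth hMB hm0 hm Θ hΘ0 hΘ' k
    set W : ℝ := max w₁ 0 with hWdef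
    have hW : (k : ℝ) * π ≤ F W := hw₁ W (le_max_left _ _)
    have hmem : (k : ℝ) * π ∈ Icc (F 0) (F W) := ⟨hF0 k hk, hW⟩
    obtain ⟨w, _, hw⟩ := intermediate_value_Icc (le_max_right w₁ 0) hF.continuousOn hmem
    exact ⟨w, hw⟩
  choose wseq hwseq using fun n : ℕ => hexists (k₀ + n) (Nat.le_add_right _ _)
  -- conclude
  rw [← sigma0_congr hAeq hBeq]
  apply Set.infinite_of_injective_forall_mem
    (f := fun n : ℕ => ((wseq n : ℝ) : ℂ))
  · intro n m' hnm
    have h1 : wseq n = wseq m' := by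
      have := hnm
      simp only [Complex.ofReal_inj] at this
      exact this
    have h2 : ((k₀ + n : ℕ) : ℝ) * π = ((k₀ + m' : ℕ) : ℝ) * π := by
      rw [← hwseq n, ← hwseq m', h1]
    have h3 : ((k₀ + n : ℕ) : ℝ) = ((k₀ + m' : ℕ) : ℝ) :=
      mul_right_cancel₀ pi_ne_zero h2
    have h4 : k₀ + n = k₀ + m' := by exact_mod_cast h3
    omega
  · intro n
    exact mem_sigma0 hA hB (hΘ0 (wseq n)) (hΘ' (wseq n))
      (k := k₀ + n) (by omega) (hwseq n)
end

section
/- The set Σ₀ is discrete in ℂ: no point of ℂ is an accumulation point of Σ₀; equivalently, every w ∈ ℂ has an open neighborhood containing at most one point of Σ₀. -/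
open Set

namespace Stmt4Aux

open intervalIntegral MeasureTheory


local notation "I" => Icc (-1:ℝ) 1

lemma uD : UniqueDiffOn ℝ (Icc (-1:ℝ) 1) := uniqueDiffOn_Icc (by norm_num)

lemma memIoo {x : ℝ} (hx : x ∈ I) (h1 : x ≠ -1) (h2 : x ≠ 1) : x ∈ Ioo (-1:ℝ) 1 :=
  ⟨lt_of_le_of_ne hx.1 (Ne.symm h1), lt_of_le_of_ne hx.2 h2⟩

/-- FTC on [-1,1] for functions with derivative within Icc. -/
lemma ftc {F F' : ℝ → ℝ} (hc : ContinuousOn F I) (hc' : ContinuousOn F' I)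
    (hd : ∀ x ∈ I, HasDerivWithinAt F (F' x) I x) :
    ∫ x in (-1:ℝ)..1, F' x = F 1 - F (-1) := by
  apply integral_eq_sub_of_hasDeriv_right_of_le (by norm_num) hc
  · intro x hx
    exact (((hd x (Ioo_subset_Icc_self hx)).hasDerivAt
      (Icc_mem_nhds hx.1 hx.2)).hasDerivWithinAt)
  · apply ContinuousOn.intervalIntegrable
    rwa [uIcc_of_le (by norm_num : (-1:ℝ) ≤ 1)]

/-- positivity of the integral of a nonneg continuous function positive at an interior point -/
lemma integral_pos {F : ℝ → ℝ} (hc : ContinuousOn F I) (h0 : ∀ x ∈ I, 0 ≤ F x)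
    {x₀ : ℝ} (hx₀ : x₀ ∈ Ioo (-1:ℝ) 1) (hF : 0 < F x₀) :
    0 < ∫ x in (-1:ℝ)..1, F x := by
  have hca : ContinuousAt F x₀ := hc.continuousAt (Icc_mem_nhds hx₀.1 hx₀.2)
  obtain ⟨δ, hδ, hball⟩ := Metric.eventually_nhds_iff.1 (continuousAt_const.eventually_lt hca
    (half_lt_self hF))
  set c := max (-1) (x₀ - δ/2) with hcdef
  set d := min 1 (x₀ + δ/2) with hddef
  have hc1 : -1 ≤ c := le_max_left _ _
  have hcx : c < x₀ := max_lt hx₀.1 (by linarith)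
  have hxd : x₀ < d := lt_min hx₀.2 (by linarith)
  have hd1 : d ≤ 1 := min_le_left _ _
  have hcd : c < d := hcx.trans hxd
  have hIcd : Icc c d ⊆ I := fun y hy => ⟨hc1.trans hy.1, hy.2.trans hd1⟩
  have hint : ∀ a b : ℝ, -1 ≤ a → a ≤ b → b ≤ 1 → IntervalIntegrable F volume a b := by
    intro a b ha hab hb
    apply ContinuousOn.intervalIntegrable
    apply hc.mono
    intro y hy
    rw [uIcc_of_le hab] at hy
    exact ⟨ha.trans hy.1, hy.2.trans hb⟩
  have key : 0 < ∫ x in c..d, F x := by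
    apply intervalIntegral_pos_of_pos_on (hint c d hc1 hcd.le hd1) _ hcd
    intro y hy
    have : dist y x₀ < δ := by
      rw [Real.dist_eq, abs_lt]
      constructor
      · have := hy.1; have : c ≤ y := hy.1.le
        have h2 : x₀ - δ/2 ≤ c := le_max_right _ _
        linarith
      · have : y ≤ d := hy.2.le
        have h2 : d ≤ x₀ + δ/2 := min_le_right _ _
        linarith
    have := hball this
    linarith
  have e1 : 0 ≤ ∫ x in (-1:ℝ)..c, F x := by
    apply integral_nonneg hc1
    intro y hy; exact h0 y ⟨hy.1, hy.2.trans (hcd.le.trans hd1)⟩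
  have e2 : 0 ≤ ∫ x in d..(1:ℝ), F x := by
    apply integral_nonneg hd1
    intro y hy; exact h0 y ⟨(hc1.trans hcd.le).trans hy.1, hy.2⟩
  have split1 : ∫ x in (-1:ℝ)..d, F x = (∫ x in (-1:ℝ)..c, F x) + ∫ x in c..d, F x :=
    (integral_add_adjacent_intervals (hint _ _ le_rfl hc1 (hcd.le.trans hd1))
      (hint _ _ hc1 hcd.le hd1)).symm
  have split2 : ∫ x in (-1:ℝ)..1, F x = (∫ x in (-1:ℝ)..d, F x) + ∫ x in d..(1:ℝ), F x :=
    (integral_add_adjacent_intervals (hint _ _ le_rfl (hc1.trans hcd.le) hd1)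
      (hint _ _ (hc1.trans hcd.le) hd1 le_rfl)).symm
  rw [split2, split1]
  linarith


/-- core Grönwall estimate for the second-order system -/
lemma gron {p e h h' : ℝ → ℝ} {K ε δ : ℝ} (hK : 1 ≤ K) (hε : 0 ≤ ε) (hδ : 0 ≤ δ)
    (hp : ∀ x ∈ I, |p x| ≤ K)
    (hc : ContinuousOn h I) (hc' : ContinuousOn h' I)
    (hd : ∀ x ∈ I, HasDerivWithinAt h (h' x) I x)
    (hd' : ∀ x ∈ I, HasDerivWithinAt h' (p x * h x + e x) I x)
    (he : ∀ x ∈ I, |e x| ≤ ε)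
    (h0 : |h (-1)| ≤ δ) (h0' : |h' (-1)| ≤ δ) :
    ∀ x ∈ I, |h x| ≤ (δ + ε) * Real.exp (2*K) ∧ |h' x| ≤ (δ + ε) * Real.exp (2*K) := by
  set f : ℝ → ℝ × ℝ := fun x => (h x, h' x) with hfdef
  have hKpos : (0:ℝ) < K := lt_of_lt_of_le one_pos hK
  have main : ∀ x ∈ I, ‖f x‖ ≤ gronwallBound δ K ε (x - (-1)) := by
    apply norm_le_gronwallBound_of_norm_deriv_right_le (f' := fun x => (h' x, p x * h x + e x))
    · exact hc.prodMk hc'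
    · intro x hx
      have hmem : Icc (-1:ℝ) 1 ∈ nhdsWithin x (Ici x) := by
        apply mem_nhdsWithin.2 ⟨Iio 1, isOpen_Iio, hx.2, ?_⟩
        rintro y ⟨hy1, hy2⟩
        exact ⟨hx.1.trans hy2, le_of_lt hy1⟩
      have hx' : x ∈ I := ⟨hx.1, hx.2.le⟩
      exact (((hd x hx').prodMk (hd' x hx')).mono_of_mem_nhdsWithin hmem)
    · rw [Prod.norm_def]
      simp only [Real.norm_eq_abs]
      exact max_le h0 h0'
    · intro x hx
      have hx' : x ∈ I := ⟨hx.1, hx.2.le⟩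
      rw [Prod.norm_def, Prod.norm_def]
      simp only [Real.norm_eq_abs]
      have h1 : |h x| ≤ max |h x| |h' x| := le_max_left _ _
      have h2 : |h' x| ≤ max |h x| |h' x| := le_max_right _ _
      have hm : (0:ℝ) ≤ max |h x| |h' x| := le_trans (abs_nonneg _) h1
      apply max_le
      · nlinarith
      · calc |p x * h x + e x| ≤ |p x * h x| + |e x| := abs_add_le _ _
          _ ≤ K * |h x| + ε := by
              rw [abs_mul]
              exact add_le_add (mul_le_mul_of_nonneg_right (hp x hx') (abs_nonneg _)) (he x hx')
          _ ≤ K * max |h x| |h' x| + ε := by nlinarith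
  intro x hx
  have hb := main x hx
  have hgb : gronwallBound δ K ε (x - (-1)) ≤ (δ + ε) * Real.exp (2*K) := by
    rw [gronwallBound_of_K_ne_0 hKpos.ne']
    have ht0 : (0:ℝ) ≤ x - (-1) := by linarith [hx.1]
    have ht2 : x - (-1) ≤ 2 := by linarith [hx.2]
    have he1 : Real.exp (K * (x - (-1))) ≤ Real.exp (2*K) := by
      apply Real.exp_le_exp.2; nlinarith
    have he2 : (1:ℝ) ≤ Real.exp (K * (x - (-1))) :=
      Real.one_le_exp (by nlinarith)
    have hεK : ε / K ≤ ε := by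
      rw [div_le_iff₀ hKpos]; nlinarith
    have hεK0 : 0 ≤ ε / K := by positivity
    have hee : Real.exp (K * (x - (-1))) - 1 ≤ Real.exp (2*K) := by
      nlinarith [Real.exp_pos (2*K)]
    nlinarith [Real.exp_pos (2*K), he1, (le_trans he2 he1)]
  rw [Prod.norm_def] at hb
  simp only [Real.norm_eq_abs] at hb
  exact ⟨le_trans (le_max_left _ _) (hb.trans hgb),
    le_trans (le_max_right _ _) (hb.trans hgb)⟩


lemma extract {α β : ℝ → ℝ} {w : ℂ} (hw : w ∈ Sigma0 α β) :
    ∃ g g' g'' : ℝ → ℂ,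
      ContinuousOn g I ∧ ContinuousOn g' I ∧ ContinuousOn g'' I ∧
      (∀ x ∈ I, HasDerivWithinAt g (g' x) I x) ∧
      (∀ x ∈ I, HasDerivWithinAt g' (g'' x) I x) ∧
      (∀ x ∈ I, g'' x = ((β x : ℂ) - w * (α x : ℂ)^2) * g x) ∧
      g (-1) = 0 ∧ g 1 = 0 ∧ ∃ x ∈ I, g x ≠ 0 := by
  obtain ⟨g, hg, hne, hb1, hb2, heq⟩ := hw
  refine ⟨g, derivWithin g I, derivWithin (derivWithin g I) I, ?_, ?_, ?_, ?_, ?_, ?_, hb1, hb2, hne⟩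
  · exact hg.continuousOn
  · exact (hg.derivWithin uD (m := 1) (by norm_num)).continuousOn
  · exact (hg.derivWithin uD (m := 1) (by norm_num)).continuousOn_derivWithin uD le_rfl
  · intro x hx
    exact ((hg.differentiableOn (by norm_num) x hx).hasDerivWithinAt)
  · intro x hx
    exact (((hg.derivWithin uD (m := 1) (by norm_num)).differentiableOn one_ne_zero x hx).hasDerivWithinAt)
  · intro x hx
    have h2 : iteratedDerivWithin 2 g (Icc (-1) 1) x
        = derivWithin (derivWithin g I) I x := by
      rw [show (2:ℕ) = 1 + 1 from rfl, iteratedDerivWithin_succ]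
      apply derivWithin_congr
      · intro y hy; exact congrFun iteratedDerivWithin_one y
      · exact congrFun iteratedDerivWithin_one x
    have := heq x hx
    rw [h2] at this
    linear_combination -this


lemma stepA {α β : ℝ → ℝ} (hα : ContinuousOn α I) (hα0 : ∀ x ∈ I, α x ≠ 0)
    {w : ℂ} (hw : w ∈ Sigma0 α β) : w.im = 0 := by
  obtain ⟨g, g', g'', hcg, hcg', hcg'', hdg, hdg', heq, hb1, hb2, x₀, hx₀, hgx₀⟩ := extract hw
  by_contra him
  set W : ℝ → ℝ := fun x => (g' x * (starRingEnd ℂ) (g x)).im with hW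
  set F : ℝ → ℝ := fun x => α x ^ 2 * Complex.normSq (g x) with hF
  have hdW : ∀ x ∈ I, HasDerivWithinAt W (-w.im * F x) I x := by
    intro x hx
    have h1 : HasDerivWithinAt (fun y => g' y * (starRingEnd ℂ) (g y))
        (g'' x * (starRingEnd ℂ) (g x) + g' x * (starRingEnd ℂ) (g' x)) I x :=
      (hdg' x hx).mul ((hdg x hx).star)
    have h2 := Complex.imCLM.hasFDerivAt.comp_hasDerivWithinAt x h1
    have h3 : (Complex.imCLM (g'' x * (starRingEnd ℂ) (g x) + g' x * (starRingEnd ℂ) (g' x)))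
        = -w.im * F x := by
      simp only [Complex.imCLM_apply, Complex.add_im]
      rw [heq x hx]
      have e1 : (g' x * (starRingEnd ℂ) (g' x)).im = 0 := by
        rw [Complex.mul_conj]; simp
      have e2 : ((β x : ℂ) - w * (α x : ℂ)^2) * g x * (starRingEnd ℂ) (g x)
          = ((β x : ℂ) - w * (α x : ℂ)^2) * Complex.normSq (g x) := by
        rw [mul_assoc, Complex.mul_conj]
      rw [e1, e2]
      simp [Complex.sub_im, Complex.mul_im, hF, ← Complex.ofReal_pow]
      ring
    rw [← h3]
    exact h2
  have hcF : ContinuousOn F I := by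
    apply ContinuousOn.mul (hα.pow 2)
    exact Complex.continuous_normSq.comp_continuousOn hcg
  have hcW : ContinuousOn W I :=
    Complex.continuous_im.comp_continuousOn (hcg'.mul (Complex.continuous_conj.comp_continuousOn hcg))
  have hFTC : ∫ x in (-1:ℝ)..1, -w.im * F x = W 1 - W (-1) :=
    ftc hcW (continuousOn_const.mul hcF) hdW
  have hWb : W 1 = 0 ∧ W (-1) = 0 := by constructor <;> simp [hW, hb1, hb2]
  have hzero : ∫ x in (-1:ℝ)..1, F x = 0 := by
    have : -w.im * ∫ x in (-1:ℝ)..1, F x = 0 := by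
      rw [← intervalIntegral.integral_const_mul, hFTC, hWb.1, hWb.2]; ring
    rcases mul_eq_zero.1 this with h | h
    · exact absurd (neg_eq_zero.1 h) him
    · exact h
  have hpos : 0 < ∫ x in (-1:ℝ)..1, F x := by
    apply integral_pos hcF
    · intro x hx
      have := Complex.normSq_nonneg (g x)
      positivity
    · show x₀ ∈ Ioo (-1:ℝ) 1
      apply memIoo hx₀
      · rintro rfl; exact hgx₀ hb1
      · rintro rfl; exact hgx₀ hb2
    · have h1 : α x₀ ≠ 0 := hα0 x₀ hx₀
      have h2 : 0 < Complex.normSq (g x₀) := Complex.normSq_pos.2 hgx₀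
      positivity
  linarith


lemma realSol {α β : ℝ → ℝ} {w : ℂ} (hw : w ∈ Sigma0 α β) (him : w.im = 0)
    {K : ℝ} (hK : 1 ≤ K) (hp : ∀ x ∈ I, |β x - w.re * α x ^ 2| ≤ K) :
    ∃ h h' : ℝ → ℝ, ContinuousOn h I ∧ ContinuousOn h' I ∧
      (∀ x ∈ I, HasDerivWithinAt h (h' x) I x) ∧
      (∀ x ∈ I, HasDerivWithinAt h' ((β x - w.re * α x ^ 2) * h x) I x) ∧
      h (-1) = 0 ∧ h 1 = 0 ∧ h' (-1) = 1 := by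
  obtain ⟨g, g', g'', hcg, hcg', hcg'', hdg, hdg', heq, hb1, hb2, x₀, hx₀, hgx₀⟩ := extract hw
  set p : ℝ → ℝ := fun x => β x - w.re * α x ^ 2 with hpdef
  have hwre : w = (w.re : ℂ) := Complex.ext rfl (by simp [him])
  have hcoef : ∀ x, ((β x : ℂ) - w * (α x : ℂ)^2) = ((p x : ℝ) : ℂ) := by
    intro x
    rw [hwre, hpdef]
    push_cast
    ring
  have key : ∀ (L : ℂ →L[ℝ] ℝ), (∀ (r : ℝ) (z : ℂ), L ((r:ℂ) * z) = r * L z) →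
      (∃ x ∈ I, L (g x) ≠ 0) →
      ∃ h h' : ℝ → ℝ, ContinuousOn h I ∧ ContinuousOn h' I ∧
        (∀ x ∈ I, HasDerivWithinAt h (h' x) I x) ∧
        (∀ x ∈ I, HasDerivWithinAt h' ((β x - w.re * α x ^ 2) * h x) I x) ∧
        h (-1) = 0 ∧ h 1 = 0 ∧ h' (-1) = 1 := by
    rintro L hL ⟨x₁, hx₁, hLx₁⟩
    set u : ℝ → ℝ := fun x => L (g x) with hu
    set u' : ℝ → ℝ := fun x => L (g' x) with hu'
    have hcu : ContinuousOn u I := L.continuous.comp_continuousOn hcg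
    have hcu' : ContinuousOn u' I := L.continuous.comp_continuousOn hcg'
    have hdu : ∀ x ∈ I, HasDerivWithinAt u (u' x) I x := fun x hx =>
      L.hasFDerivAt.comp_hasDerivWithinAt x (hdg x hx)
    have hdu' : ∀ x ∈ I, HasDerivWithinAt u' (p x * u x) I x := by
      intro x hx
      have := L.hasFDerivAt.comp_hasDerivWithinAt x (hdg' x hx)
      have he : L (g'' x) = p x * u x := by
        rw [heq x hx, hcoef x, hL]
      rw [← he]
      exact this
    have hub1 : u (-1) = 0 := by rw [hu]; simp [hb1]
    have hub2 : u 1 = 0 := by rw [hu]; simp [hb2]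
    have hu'ne : u' (-1) ≠ 0 := by
      intro hc
      have hz := gron (e := fun _ => (0:ℝ)) hK le_rfl le_rfl hp hcu hcu' hdu
        (by intro x hx; simpa using hdu' x hx)
        (by intro x hx; simp)
        (by simp [hub1]) (by simp [hc])
      have := (hz x₁ hx₁).1
      simp only [zero_add, zero_mul] at this
      exact hLx₁ (abs_nonneg (u x₁) |>.antisymm (by simpa using this) |> fun h => by
        exact (abs_eq_zero.1 h.symm))
    refine ⟨fun x => u x / u' (-1), fun x => u' x / u' (-1), hcu.div_const _, hcu'.div_const _,
      fun x hx => (hdu x hx).div_const _, ?_, by simp [hub1], by simp [hub2],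
      div_self hu'ne⟩
    intro x hx
    have := (hdu' x hx).div_const (u' (-1))
    have he : p x * u x / u' (-1) = (β x - w.re * α x ^ 2) * (u x / u' (-1)) := by
      rw [hpdef]; ring
    rw [he] at this
    exact this
  by_cases hre : ∃ x ∈ I, (g x).re ≠ 0
  · apply key Complex.reCLM
    · intro r z; simp [Complex.mul_re]
    · simpa using hre
  · apply key Complex.imCLM
    · intro r z; simp [Complex.mul_im]
    · push_neg at hre
      refine ⟨x₀, hx₀, ?_⟩
      simp only [Complex.imCLM_apply]
      intro hc
      apply hgx₀
      exact Complex.ext (hre x₀ hx₀) hc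


lemma orth {α β : ℝ → ℝ} (hα : ContinuousOn α I) {v₁ v₂ : ℝ} (hne : v₁ ≠ v₂)
    {h₁ h₁' h₂ h₂' : ℝ → ℝ}
    (hc₁ : ContinuousOn h₁ I) (hc₁' : ContinuousOn h₁' I)
    (hc₂ : ContinuousOn h₂ I) (hc₂' : ContinuousOn h₂' I)
    (hd₁ : ∀ x ∈ I, HasDerivWithinAt h₁ (h₁' x) I x)
    (hd₁' : ∀ x ∈ I, HasDerivWithinAt h₁' ((β x - v₁ * α x ^ 2) * h₁ x) I x)
    (hd₂ : ∀ x ∈ I, HasDerivWithinAt h₂ (h₂' x) I x)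
    (hd₂' : ∀ x ∈ I, HasDerivWithinAt h₂' ((β x - v₂ * α x ^ 2) * h₂ x) I x)
    (hb₁ : h₁ (-1) = 0) (hb₁' : h₁ 1 = 0) (hb₂ : h₂ (-1) = 0) (hb₂' : h₂ 1 = 0) :
    ∫ x in (-1:ℝ)..1, α x ^ 2 * (h₁ x * h₂ x) = 0 := by
  set P : ℝ → ℝ := fun x => h₁' x * h₂ x - h₂' x * h₁ x with hP
  have hdP : ∀ x ∈ I, HasDerivWithinAt P ((v₂ - v₁) * (α x ^ 2 * (h₁ x * h₂ x))) I x := by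
    intro x hx
    have := ((hd₁' x hx).mul (hd₂ x hx)).sub ((hd₂' x hx).mul (hd₁ x hx))
    refine (this : HasDerivWithinAt P _ I x).congr_deriv ?_
    ring
  have hcP : ContinuousOn P I := (hc₁'.mul hc₂).sub (hc₂'.mul hc₁)
  have hcF : ContinuousOn (fun x => (v₂ - v₁) * (α x ^ 2 * (h₁ x * h₂ x))) I :=
    continuousOn_const.mul (((hα.pow 2)).mul (hc₁.mul hc₂))
  have hFTC := ftc hcP hcF hdP
  have hPb : P 1 = 0 ∧ P (-1) = 0 := by constructor <;> simp [hP, hb₁, hb₁', hb₂, hb₂']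
  rw [hPb.1, hPb.2, sub_zero, intervalIntegral.integral_const_mul] at hFTC
  rcases mul_eq_zero.1 hFTC with hcase | hcase
  · exact absurd (sub_eq_zero.1 hcase).symm hne
  · exact hcase

lemma lower {α β : ℝ → ℝ} (hα : ContinuousOn α I) {v a K M : ℝ} (hK : 1 ≤ K) (hM : 1 ≤ M)
    (ha : 0 < a) (haα : ∀ x ∈ I, a ≤ |α x|)
    {h h' : ℝ → ℝ} (hc : ContinuousOn h I)
    (hd : ∀ x ∈ I, HasDerivWithinAt h (h' x) I x)
    (hd' : ∀ x ∈ I, HasDerivWithinAt h' ((β x - v * α x ^ 2) * h x) I x)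
    (hp : ∀ x ∈ I, |β x - v * α x ^ 2| ≤ K)
    (hhM : ∀ x ∈ I, |h x| ≤ M)
    (hb1 : h (-1) = 0) (h0' : h' (-1) = 1) :
    a^2/4 * ((1/(2*K*M))^3/3) ≤ ∫ x in (-1:ℝ)..1, α x ^ 2 * (h x * h x) := by
  set δ₀ : ℝ := 1/(2*K*M) with hδ₀
  have hKM : 1 ≤ K * M := by nlinarith
  have hδpos : 0 < δ₀ := by rw [hδ₀]; positivity
  have hδhalf : δ₀ ≤ 1/2 := by
    rw [hδ₀, div_le_div_iff₀ (by nlinarith) (by norm_num)]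
    nlinarith
  set m : ℝ := -1 + δ₀ with hm
  have hmI : m ∈ I := ⟨by linarith, by linarith⟩
  -- bound on h'
  have step1 : ∀ x ∈ I, |h' x - 1| ≤ K * M * (x - (-1)) := by
    have hbd : ∀ x ∈ Ico (-1:ℝ) 1, ‖(β x - v * α x ^ 2) * h x‖ ≤ K * M := by
      intro x hx
      have hx' : x ∈ I := ⟨hx.1, hx.2.le⟩
      rw [Real.norm_eq_abs, abs_mul]
      have := hp x hx'
      have := hhM x hx'
      have := abs_nonneg ((β x - v * α x ^ 2))
      have := abs_nonneg (h x)
      nlinarith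
    have key := norm_image_sub_le_of_norm_deriv_le_segment' (a := -1) (b := 1)
      (f := h') (f' := fun x => (β x - v * α x ^ 2) * h x) (C := K * M) hd' hbd
    intro x hx
    have := key x hx
    rwa [Real.norm_eq_abs, h0'] at this
  -- lower bound h on J
  have hJ : Icc (-1:ℝ) m ⊆ I := fun y hy => ⟨hy.1, hy.2.trans hmI.2⟩
  have step2 : ∀ x ∈ Icc (-1:ℝ) m, (x + 1)/2 ≤ h x := by
    have hder : ∀ x ∈ Icc (-1:ℝ) m, HasDerivWithinAt (fun x => h x - (x + 1)) (h' x - 1) (Icc (-1) m) x := by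
      intro x hx
      have hx' : x ∈ I := hJ hx
      exact ((hd x hx').mono hJ).sub (((hasDerivAt_id x).add_const 1).hasDerivWithinAt)
    have hbd2 : ∀ x ∈ Ico (-1:ℝ) m, ‖h' x - 1‖ ≤ 1/2 := by
      intro x hx
      have hx' : x ∈ I := hJ ⟨hx.1, hx.2.le⟩
      have h1 := step1 x hx'
      have h2 : x - (-1) ≤ δ₀ := by
        have := hx.2; rw [hm] at this; linarith
      rw [Real.norm_eq_abs]
      calc |h' x - 1| ≤ K * M * (x - (-1)) := h1
        _ ≤ K * M * δ₀ := by nlinarith [hx.1, sub_nonneg.2 (neg_le_iff_add_nonneg.1 hx.1)]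
        _ ≤ 1/2 := by rw [hδ₀]; rw [mul_one_div]; rw [div_le_div_iff₀ (by nlinarith) (by norm_num)]; nlinarith
    have key := norm_image_sub_le_of_norm_deriv_le_segment' (a := -1) (b := m)
      (f := fun x => h x - (x + 1)) (f' := fun x => h' x - 1) (C := 1/2) hder hbd2
    · intro x hx
      have hkey := key x hx
      simp only [Real.norm_eq_abs] at hkey
      rw [hb1] at hkey
      norm_num at hkey
      rw [abs_le] at hkey
      linarith [hkey.1]
  -- integrals
  have hcF : ContinuousOn (fun x => α x ^ 2 * (h x * h x)) I := (hα.pow 2).mul (hc.mul hc)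
  have hint : ∀ b c : ℝ, -1 ≤ b → b ≤ c → c ≤ 1 →
      IntervalIntegrable (fun x => α x ^ 2 * (h x * h x)) volume b c := by
    intro b c h1 h2 h3
    apply ContinuousOn.intervalIntegrable
    apply hcF.mono
    intro y hy
    rw [uIcc_of_le h2] at hy
    exact ⟨h1.trans hy.1, hy.2.trans h3⟩
  have hsplit : ∫ x in (-1:ℝ)..1, α x ^ 2 * (h x * h x)
      = (∫ x in (-1:ℝ)..m, α x ^ 2 * (h x * h x)) + ∫ x in m..1, α x ^ 2 * (h x * h x) :=
    (integral_add_adjacent_intervals (hint _ _ le_rfl hmI.1 hmI.2)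
      (hint _ _ hmI.1 hmI.2 le_rfl)).symm
  have hpos2 : 0 ≤ ∫ x in m..1, α x ^ 2 * (h x * h x) := by
    apply integral_nonneg hmI.2
    intro y hy
    nlinarith [sq_nonneg (α y), sq_nonneg (h y)]
  have hmono : ∫ x in (-1:ℝ)..m, a^2/4 * (x+1)^2 ≤ ∫ x in (-1:ℝ)..m, α x ^ 2 * (h x * h x) := by
    apply intervalIntegral.integral_mono_on hmI.1
    · apply Continuous.intervalIntegrable
      exact continuous_const.mul ((continuous_id.add continuous_const).pow 2)
    · exact hint _ _ le_rfl hmI.1 hmI.2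
    · intro x hx
      have hx' : x ∈ I := hJ hx
      have h1 := step2 x hx
      have h2 := haα x hx'
      have h3 : a ≤ α x ∨ a ≤ -α x := by
        rcases abs_cases (α x) with ⟨he, _⟩ | ⟨he, _⟩
        · left; rw [← he]; exact h2
        · right; rw [← he]; exact h2
      have h4 : a^2 ≤ α x ^ 2 := by
        rcases h3 with h3 | h3 <;> nlinarith
      have h5 : 0 ≤ (x+1)/2 := by linarith [hx.1]
      have h6 : ((x+1)/2)^2 ≤ h x * h x := by nlinarith
      calc a^2/4 * (x+1)^2 = a^2 * ((x+1)/2)^2 := by ring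
        _ ≤ α x ^ 2 * (h x * h x) := mul_le_mul h4 h6 (by positivity) (sq_nonneg _)
  have hcomp : ∫ x in (-1:ℝ)..m, a^2/4 * (x+1)^2 = a^2/4 * (δ₀^3/3) := by
    rw [intervalIntegral.integral_const_mul]
    have hFTC : ∫ x in (-1:ℝ)..m, (x+1)^2 = (m+1)^3/3 - ((-1:ℝ)+1)^3/3 := by
      apply intervalIntegral.integral_eq_sub_of_hasDerivAt (f := fun x => (x+1)^3/3)
      · intro x hx
        have := (((hasDerivAt_id x).add_const 1).pow 3).div_const 3
        refine this.congr_deriv ?_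
        simp
      · apply Continuous.intervalIntegrable
        exact (continuous_id.add continuous_const).pow 2
    rw [hFTC]
    rw [hm]
    ring
  rw [hsplit]
  rw [hcomp] at hmono
  linarith


set_option maxHeartbeats 1000000 in
theorem main (α β : ℝ → ℝ)
    (hα : ContinuousOn α (Icc (-1) 1)) (hβ : ContinuousOn β (Icc (-1) 1))
    (hα0 : ∀ x ∈ Icc (-1 : ℝ) 1, α x ≠ 0) :
    ∀ w : ℂ, ∃ U : Set ℂ, IsOpen U ∧ w ∈ U ∧ (Sigma0 α β ∩ U).Subsingleton := by
  intro w
  by_cases him : w.im = 0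
  swap
  · refine ⟨{z | z.im ≠ 0}, isOpen_ne_fun Complex.continuous_im continuous_const, him, ?_⟩
    rintro z ⟨hz1, hz2⟩ _ _
    exact absurd (stepA hα hα0 hz1) hz2
  -- constants
  obtain ⟨xm, hxmI, hxm⟩ := isCompact_Icc.exists_isMinOn ⟨-1, by norm_num, by norm_num⟩ hα.abs
  set a : ℝ := |α xm| with hadef
  have ha : 0 < a := abs_pos.2 (hα0 xm hxmI)
  have haα : ∀ x ∈ I, a ≤ |α x| := fun x hx => hxm hx
  obtain ⟨A₀, hA₀⟩ := isCompact_Icc.exists_bound_of_continuousOn hα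
  obtain ⟨C₀, hC₀⟩ := isCompact_Icc.exists_bound_of_continuousOn hβ
  set A : ℝ := max A₀ 1 with hAdef
  have hA1 : 1 ≤ A := le_max_right _ _
  have hAb : ∀ x ∈ I, |α x| ≤ A := fun x hx => le_trans (hA₀ x hx) (le_max_left _ _)
  set Cb : ℝ := max C₀ 0 with hCbdef
  have hCb0 : 0 ≤ Cb := le_max_right _ _
  have hCbb : ∀ x ∈ I, |β x| ≤ Cb := fun x hx => le_trans (hC₀ x hx) (le_max_left _ _)
  set K : ℝ := 1 + Cb + (|w.re| + 1) * A ^ 2 with hKdef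
  have hK : 1 ≤ K := by
    have h1 : 0 ≤ |w.re| := abs_nonneg _
    nlinarith
  have hKpos : 0 < K := lt_of_lt_of_le one_pos hK
  set M : ℝ := Real.exp (2 * K) with hMdef
  have hM : 1 ≤ M := Real.one_le_exp (by nlinarith)
  have hMpos : 0 < M := lt_of_lt_of_le one_pos hM
  have hpgen : ∀ v : ℝ, |v - w.re| ≤ 1 → ∀ x ∈ I, |β x - v * α x ^ 2| ≤ K := by
    intro v hv x hx
    have h1 : |v| ≤ |w.re| + 1 := by
      have := abs_sub_abs_le_abs_sub v w.re
      linarith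
    have h2 : α x ^ 2 ≤ A ^ 2 := by
      have := hAb x hx
      have := abs_nonneg (α x)
      nlinarith [sq_abs (α x)]
    calc |β x - v * α x ^ 2| ≤ |β x| + |v| * α x ^ 2 := by
          have := abs_sub (β x) (v * α x ^ 2)
          calc |β x - v * α x ^ 2| ≤ |β x| + |v * α x ^ 2| := abs_sub _ _
            _ = |β x| + |v| * α x ^ 2 := by rw [abs_mul, abs_of_nonneg (sq_nonneg (α x))]
      _ ≤ Cb + (|w.re| + 1) * A ^ 2 := by
          have h3 := hCbb x hx
          have h4 : 0 ≤ |v| := abs_nonneg _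
          have h5 : 0 ≤ α x ^ 2 := sq_nonneg _
          nlinarith
      _ ≤ K := by rw [hKdef]; linarith
  set c : ℝ := a^2/4 * ((1/(2*K*M))^3/3) with hcdef
  have hc : 0 < c := by positivity
  set Q : ℝ := 2 * A^4 * M^3 with hQdef
  have hQ : 0 < Q := by positivity
  set r : ℝ := min 1 (c / (2*(Q+1))) with hrdef
  have hr : 0 < r := lt_min one_pos (by positivity)
  refine ⟨Metric.ball w r, Metric.isOpen_ball, Metric.mem_ball_self hr, ?_⟩
  rintro w₁ ⟨hw₁S, hw₁U⟩ w₂ ⟨hw₂S, hw₂U⟩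
  by_contra hne
  have him₁ : w₁.im = 0 := stepA hα hα0 hw₁S
  have him₂ : w₂.im = 0 := stepA hα hα0 hw₂S
  set v₁ : ℝ := w₁.re with hv₁
  set v₂ : ℝ := w₂.re with hv₂
  have hvne : v₁ ≠ v₂ := by
    intro hc'
    exact hne (Complex.ext hc' (him₁.trans him₂.symm))
  have hre₁ : |v₁ - w.re| < r := by
    have h1 : |(w₁ - w).re| ≤ ‖w₁ - w‖ := Complex.abs_re_le_norm _
    have h2 : ‖w₁ - w‖ = dist w₁ w := (Complex.dist_eq w₁ w).symm
    have h3 : dist w₁ w < r := Metric.mem_ball.1 hw₁U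
    simpa using lt_of_le_of_lt (h2 ▸ h1) h3
  have hre₂ : |v₂ - w.re| < r := by
    have h1 : |(w₂ - w).re| ≤ ‖w₂ - w‖ := Complex.abs_re_le_norm _
    have h2 : ‖w₂ - w‖ = dist w₂ w := (Complex.dist_eq w₂ w).symm
    have h3 : dist w₂ w < r := Metric.mem_ball.1 hw₂U
    simpa using lt_of_le_of_lt (h2 ▸ h1) h3
  have hr1 : r ≤ 1 := min_le_left _ _
  have hp₁ : ∀ x ∈ I, |β x - v₁ * α x ^ 2| ≤ K := hpgen v₁ (le_trans hre₁.le hr1)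
  have hp₂ : ∀ x ∈ I, |β x - v₂ * α x ^ 2| ≤ K := hpgen v₂ (le_trans hre₂.le hr1)
  obtain ⟨h₁, h₁', hch₁, hch₁', hdh₁, hdh₁', hb₁, hb₁', hn₁⟩ := realSol hw₁S him₁ hK hp₁
  obtain ⟨h₂, h₂', hch₂, hch₂', hdh₂, hdh₂', hb₂, hb₂', hn₂⟩ := realSol hw₂S him₂ hK hp₂
  -- sup bounds
  have hM₁ : ∀ x ∈ I, |h₁ x| ≤ M ∧ |h₁' x| ≤ M := by
    have := gron (e := fun _ => (0:ℝ)) (δ := 1) hK le_rfl zero_le_one hp₁ hch₁ hch₁' hdh₁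
      (by intro x hx; simpa using hdh₁' x hx) (by intro x hx; simp)
      (by simp [hb₁]) (by simp [hn₁])
    intro x hx
    have h := this x hx
    simpa [hMdef] using h
  have hM₂ : ∀ x ∈ I, |h₂ x| ≤ M ∧ |h₂' x| ≤ M := by
    have := gron (e := fun _ => (0:ℝ)) (δ := 1) hK le_rfl zero_le_one hp₂ hch₂ hch₂' hdh₂
      (by intro x hx; simpa using hdh₂' x hx) (by intro x hx; simp)
      (by simp [hb₂]) (by simp [hn₂])
    intro x hx
    have h := this x hx
    simpa [hMdef] using h
  -- difference bound
  set d : ℝ := |v₁ - v₂| with hddef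
  have hd0 : 0 ≤ d := abs_nonneg _
  have hdiff : ∀ x ∈ I, |h₁ x - h₂ x| ≤ d * A^2 * M * M := by
    have hgr := gron (p := fun x => β x - v₁ * α x ^ 2)
      (e := fun x => (v₂ - v₁) * (α x ^ 2 * h₂ x))
      (h := fun x => h₁ x - h₂ x) (h' := fun x => h₁' x - h₂' x)
      (δ := 0) (ε := d * A^2 * M) hK ?_ le_rfl hp₁
      (hch₁.sub hch₂) (hch₁'.sub hch₂')
      (fun x hx => (hdh₁ x hx).sub (hdh₂ x hx)) ?_ ?_
      (by simp [hb₁, hb₂]) (by simp [hn₁, hn₂])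
    · intro x hx
      have h := (hgr x hx).1
      rw [zero_add] at h
      calc |h₁ x - h₂ x| ≤ d * A^2 * M * Real.exp (2*K) := h
        _ = d * A^2 * M * M := by rw [hMdef]
    · positivity
    · intro x hx
      have hthis := (hdh₁' x hx).sub (hdh₂' x hx)
      have hveq : (β x - v₁ * α x ^ 2) * h₁ x - (β x - v₂ * α x ^ 2) * h₂ x
          = (β x - v₁ * α x ^ 2) * (h₁ x - h₂ x) + (v₂ - v₁) * (α x ^ 2 * h₂ x) := by ring
      rw [hveq] at hthis
      exact hthis
    · intro x hx
      have hα2 : α x ^ 2 ≤ A ^ 2 := by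
        have := hAb x hx
        have := abs_nonneg (α x)
        nlinarith [sq_abs (α x)]
      have hh2 := (hM₂ x hx).1
      rw [abs_mul, abs_mul, abs_of_nonneg (sq_nonneg (α x))]
      have h1 : |v₂ - v₁| = d := by rw [hddef, abs_sub_comm]
      rw [h1]
      have h2 : 0 ≤ α x ^ 2 := sq_nonneg _
      have h3 : 0 ≤ |h₂ x| := abs_nonneg _
      have h4 : α x ^ 2 * |h₂ x| ≤ A^2 * M := mul_le_mul hα2 hh2 h3 (by positivity)
      calc d * (α x ^ 2 * |h₂ x|) ≤ d * (A^2*M) := mul_le_mul_of_nonneg_left h4 hd0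
        _ = d * A^2 * M := by ring
  -- integrals
  have horth := orth hα hvne hch₁ hch₁' hch₂ hch₂' hdh₁ hdh₁' hdh₂ hdh₂' hb₁ hb₁' hb₂ hb₂'
  have hlow := lower hα hK hM ha haα hch₁ hdh₁ hdh₁' hp₁ (fun x hx => (hM₁ x hx).1) hb₁ hn₁
  have hintg : ∀ (u : ℝ → ℝ), ContinuousOn u I → IntervalIntegrable u volume (-1) 1 := by
    intro u hu
    apply ContinuousOn.intervalIntegrable
    rwa [uIcc_of_le (by norm_num : (-1:ℝ) ≤ 1)]
  have hsub : ∫ x in (-1:ℝ)..1, (α x ^ 2 * (h₁ x * h₂ x) - α x ^ 2 * (h₁ x * h₁ x))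
      = - ∫ x in (-1:ℝ)..1, α x ^ 2 * (h₁ x * h₁ x) := by
    rw [intervalIntegral.integral_sub (hintg (fun x => α x ^ 2 * (h₁ x * h₂ x)) ((hα.pow 2).mul (hch₁.mul hch₂)))
      (hintg (fun x => α x ^ 2 * (h₁ x * h₁ x)) ((hα.pow 2).mul (hch₁.mul hch₁))), horth, zero_sub]
  have hbnd : |∫ x in (-1:ℝ)..1, (α x ^ 2 * (h₁ x * h₂ x) - α x ^ 2 * (h₁ x * h₁ x))|
      ≤ d * A^4 * M^3 * 2 := by
    have := intervalIntegral.norm_integral_le_of_norm_le_const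
      (a := (-1:ℝ)) (b := (1:ℝ)) (C := d * A^4 * M^3)
      (f := fun x => α x ^ 2 * (h₁ x * h₂ x) - α x ^ 2 * (h₁ x * h₁ x)) ?_
    · rw [Real.norm_eq_abs] at this
      calc |∫ x in (-1:ℝ)..1, (α x ^ 2 * (h₁ x * h₂ x) - α x ^ 2 * (h₁ x * h₁ x))|
          ≤ d * A^4 * M^3 * |1 - (-1:ℝ)| := this
        _ = d * A^4 * M^3 * 2 := by norm_num
    · intro x hx
      have hxI : x ∈ I := by
        rw [uIoc_of_le (by norm_num : (-1:ℝ) ≤ 1)] at hx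
        exact ⟨hx.1.le, hx.2⟩
      have he : α x ^ 2 * (h₁ x * h₂ x) - α x ^ 2 * (h₁ x * h₁ x)
          = α x ^ 2 * h₁ x * (h₂ x - h₁ x) := by ring
      simp only [Real.norm_eq_abs]
      rw [he, abs_mul, abs_mul, abs_of_nonneg (sq_nonneg (α x))]
      have h1 : α x ^ 2 ≤ A ^ 2 := by
        have := hAb x hxI
        have := abs_nonneg (α x)
        nlinarith [sq_abs (α x)]
      have h2 := (hM₁ x hxI).1
      have h3 : |h₂ x - h₁ x| ≤ d * A^2 * M * M := by
        rw [abs_sub_comm]; exact hdiff x hxI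
      have h4 : 0 ≤ α x ^ 2 := sq_nonneg _
      have h5 : 0 ≤ |h₁ x| := abs_nonneg _
      have h6 : 0 ≤ |h₂ x - h₁ x| := abs_nonneg _
      have h7 : 0 ≤ A ^ 2 := by positivity
      have h8 : 0 ≤ M := hMpos.le
      calc α x ^ 2 * |h₁ x| * |h₂ x - h₁ x| ≤ A^2 * M * (d * A^2 * M * M) := by
            apply mul_le_mul _ h3 h6 (by positivity)
            exact mul_le_mul h1 h2 h5 h7
        _ = d * A^4 * M^3 := by ring
  -- contradiction
  have hd2r : d < 2 * r := by
    calc d = |v₁ - v₂| := rfl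
      _ ≤ |v₁ - w.re| + |w.re - v₂| := abs_sub_le _ _ _
      _ < r + r := by rw [abs_sub_comm w.re v₂]; exact add_lt_add hre₁ hre₂
      _ = 2 * r := by ring
  have hrc : 2 * r ≤ c / (Q + 1) := by
    have h1 : r ≤ c / (2*(Q+1)) := min_le_right _ _
    have h2 : (2:ℝ) * (c / (2*(Q+1))) = c/(Q+1) := by
      rw [eq_div_iff (by positivity : (Q+(1:ℝ)) ≠ 0)]
      field_simp
    linarith
  have hfinal : c ≤ d * A^4 * M^3 * 2 := by
    rw [hsub] at hbnd
    rw [abs_neg] at hbnd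
    have h9 : 0 ≤ ∫ x in (-1:ℝ)..1, α x ^ 2 * (h₁ x * h₁ x) := le_trans hc.le hlow
    rw [abs_of_nonneg h9] at hbnd
    linarith
  have hQd : d * A^4 * M^3 * 2 = d * Q := by rw [hQdef]; ring
  rw [hQd] at hfinal
  have : d * Q < c := by
    have h1 : d < c / (Q+1) := lt_of_lt_of_le hd2r hrc
    rw [lt_div_iff₀ (by positivity)] at h1
    nlinarith
  linarith


end Stmt4Aux

/-- for continuous `α, β : [-1,1] → ℝ` with `α` nonvanishing, the set `Σ₀`
is discrete in `ℂ`: every `w ∈ ℂ` has an open neighborhood containing at most one point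
of `Σ₀`. -/
theorem stmt4 (α β : ℝ → ℝ)
    (hα : ContinuousOn α (Icc (-1) 1)) (hβ : ContinuousOn β (Icc (-1) 1))
    (hα0 : ∀ x ∈ Icc (-1 : ℝ) 1, α x ≠ 0) :
    ∀ w : ℂ, ∃ U : Set ℂ, IsOpen U ∧ w ∈ U ∧ (Sigma0 α β ∩ U).Subsingleton := by
  exact Stmt4Aux.main α β hα hβ hα0
end

section
/- Let f : ℝ → ℂ be continuous with compact support contained in (0,∞). Then ∫_0^∞ |f(t)|² dt = (1/(2π)) ∫_ℝ |M f(1/2 + iτ)|² dτ, where M f(s) = ∫_0^∞ t^{s-1} f(t) dt is the Mellin transform. -/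
open MeasureTheory Complex Real Filter
open scoped FourierTransform ComplexConjugate RealInnerProductSpace Topology

namespace Stmt10Aux

lemma mult_formula {f w : ℝ → ℂ} (hf : Integrable f) (hw : Integrable w) :
    ∫ ξ, (𝓕 f ξ) * w ξ = ∫ x, f x * 𝓕 w x := by
  have hflip : (innerₗ ℝ).flip = innerₗ ℝ := by
    apply LinearMap.ext; intro x; apply LinearMap.ext; intro y
    simp only [LinearMap.flip_apply]
    exact real_inner_comm x y
  have h := VectorFourier.integral_fourierIntegral_smul_eq_flip (L := innerₗ ℝ)
    Real.continuous_fourierChar continuous_inner hf hw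
  rw [hflip] at h
  simp only [smul_eq_mul] at h
  exact h

lemma conj_fourier (g : ℝ → ℂ) (ξ : ℝ) :
    𝓕 (fun y => conj (g (-y))) ξ = conj (𝓕 g ξ) := by
  set G : ℝ → ℂ := fun u => cexp ((↑(2 * π * u * ξ) : ℂ) * I) * conj (g u) with hG
  rw [Real.fourier_real_eq_integral_exp_smul,
    Real.fourier_real_eq_integral_exp_smul, ← integral_conj]
  calc ∫ v : ℝ, cexp ((↑(-2 * π * v * ξ) : ℂ) * I) • conj (g (-v))
      = ∫ v : ℝ, G (-v) := by
        congr 1; funext v; rw [hG]; rw [smul_eq_mul]; push_cast; ring_nf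
    _ = ∫ v : ℝ, G v := integral_neg_eq_self G _
    _ = ∫ v : ℝ, conj (cexp ((↑(-2 * π * v * ξ) : ℂ) * I) • g v) := by
        congr 1; funext v
        rw [hG]
        simp only [smul_eq_mul, map_mul, ← Complex.exp_conj, map_mul, Complex.conj_I,
          Complex.conj_ofReal]
        push_cast
        ring_nf

/-- The real Gaussian kernel of total mass one. -/
noncomputable def Kr (c : ℝ) (u : ℝ) : ℝ := Real.sqrt (π * c) * rexp (-(π ^ 2 * c) * u ^ 2)

lemma Kr_nonneg (c u : ℝ) : 0 ≤ Kr c u := by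
  unfold Kr; positivity

lemma Kr_integrable {c : ℝ} (hc : 0 < c) : Integrable (Kr c) := by
  unfold Kr
  exact (integrable_exp_neg_mul_sq (by positivity)).const_mul _

lemma Kr_integral {c : ℝ} (hc : 0 < c) : ∫ u, Kr c u = 1 := by
  unfold Kr
  rw [integral_const_mul, integral_gaussian, ← Real.sqrt_mul (by positivity)]
  rw [show π * c * (π / (π ^ 2 * c)) = 1 by field_simp]
  exact Real.sqrt_one

/-- The complex Gaussian kernel appearing in `Real.tendsto_integral_gaussian_smul'`. -/
noncomputable def Kc (c : ℝ) (x y : ℝ) : ℂ :=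
  (π * c : ℂ) ^ (1 / 2 : ℂ) * cexp (-(π : ℂ) ^ 2 * c * ‖x - y‖ ^ 2)

lemma norm_Kc {c : ℝ} (hc : 0 < c) (x y : ℝ) : ‖Kc c x y‖ = Kr c (x - y) := by
  unfold Kc Kr
  rw [norm_mul]
  congr 1
  · rw [show (π * c : ℂ) = ((π * c : ℝ) : ℂ) by push_cast; ring]
    rw [Complex.norm_cpow_eq_rpow_re_of_pos (by positivity)]
    rw [Real.sqrt_eq_rpow]
    norm_num
  · rw [show (-(π : ℂ) ^ 2 * c * ‖x - y‖ ^ 2) = ((-(π ^ 2 * c) * |x - y| ^ 2 : ℝ) : ℂ) by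
      push_cast [Real.norm_eq_abs]; ring]
    rw [Complex.norm_exp]
    rw [Complex.ofReal_re, _root_.sq_abs]

lemma fourier_phi {c : ℝ} (hc : 0 < c) (x y : ℝ) :
    𝓕 (fun ξ : ℝ => cexp (-(c : ℂ)⁻¹ * ‖ξ‖ ^ 2 + 2 * π * I * ⟪(-x : ℝ), ξ⟫)) y
      = Kc c x (-y) := by
  rw [fourier_gaussian_innerProductSpace' (by simpa using hc)]
  unfold Kc
  rw [Module.finrank_self]
  push_cast
  rw [show (-x : ℝ) - y = -(x + y) by ring, show x - -y = x + y by ring]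
  rw [norm_neg]
  congr 1
  · congr 1
    field_simp
  · congr 1
    field_simp

section Plancherel

variable {g : ℝ → ℂ} (hg : Continuous g) (hgs : HasCompactSupport g)

/-- Step A: second multiplication-formula application. -/
lemma stepA (hg : Continuous g) (hgs : HasCompactSupport g) {c : ℝ} (hc : 0 < c) (x : ℝ) :
    𝓕 (fun ξ => conj (𝓕 g ξ) * cexp (-(c : ℂ)⁻¹ * (ξ : ℂ) ^ 2)) x
      = ∫ y, Kc c x y * conj (g y) := by
  have hgi : Integrable g := hg.integrable_of_hasCompactSupport hgs
  have hgtil : Integrable (fun y => conj (g (-y))) := by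
    have : Integrable (fun y => conj (g y)) :=
      (Complex.continuous_conj.comp hg).integrable_of_hasCompactSupport
        (hgs.comp_left (by simp))
    exact this.comp_neg
  set φ : ℝ → ℂ := fun ξ => cexp (-(c : ℂ)⁻¹ * ‖ξ‖ ^ 2 + 2 * π * I * ⟪(-x : ℝ), ξ⟫) with hφdef
  have hφ : Integrable φ :=
    GaussianFourier.integrable_cexp_neg_mul_sq_norm_add (by simpa using hc) _ _
  calc 𝓕 (fun ξ => conj (𝓕 g ξ) * cexp (-(c : ℂ)⁻¹ * (ξ : ℂ) ^ 2)) x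
      = ∫ ξ : ℝ, 𝓕 (fun y => conj (g (-y))) ξ * φ ξ := by
        rw [Real.fourier_real_eq]
        congr 1; funext ξ
        rw [conj_fourier, Circle.smul_def, Real.fourierChar_apply]
        simp only [hφdef]
        have h1 : ((‖ξ‖ : ℝ) : ℂ) ^ 2 = (ξ : ℂ) ^ 2 := by
          norm_cast
          simp [Real.norm_eq_abs, _root_.sq_abs]
        have h2 : (⟪(-x : ℝ), ξ⟫ : ℝ) = -x * ξ := by rw [real_inner_comm]; rfl
        rw [h2, h1, Complex.exp_add, ← mul_assoc]
        push_cast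
        ring_nf
    _ = ∫ y, conj (g (-y)) * 𝓕 φ y := mult_formula hgtil hφ
    _ = ∫ y, conj (g (-y)) * Kc c x (-y) := by
        congr 1; funext y; rw [hφdef, fourier_phi hc]
    _ = ∫ y, conj (g y) * Kc c x y :=
        integral_neg_eq_self (fun y => conj (g y) * Kc c x y) _
    _ = ∫ y, Kc c x y * conj (g y) := by
        congr 1; funext y; ring

/-- Step B: pointwise convergence of the Gaussian mollification. -/
lemma stepB (hg : Continuous g) (hgs : HasCompactSupport g) (x : ℝ) :
    Tendsto (fun c : ℝ => ∫ y, Kc c x y * conj (g y)) atTop (𝓝 (conj (g x))) := by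
  have hconj : Integrable (fun y => conj (g y)) :=
    (Complex.continuous_conj.comp hg).integrable_of_hasCompactSupport
      (hgs.comp_left (by simp))
  have h := Real.tendsto_integral_gaussian_smul' (f := fun y => conj (g y)) (v := x) hconj
    (Complex.continuous_conj.comp hg).continuousAt
  convert h using 3 with c
  · rfl
  unfold Kc
  rw [Module.finrank_self]
  norm_num [smul_eq_mul]

/-- Step C: uniform bound. -/
lemma stepC (hg : Continuous g) {Cb : ℝ} (hCb : ∀ y, ‖g y‖ ≤ Cb) {c : ℝ} (hc : 0 < c) (x : ℝ) :
    ‖∫ y, Kc c x y * conj (g y)‖ ≤ Cb := by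
  have h0 : 0 ≤ Cb := le_trans (norm_nonneg _) (hCb 0)
  calc ‖∫ y, Kc c x y * conj (g y)‖ ≤ ∫ y, Kr c (x - y) * Cb := by
        apply norm_integral_le_of_norm_le (((Kr_integrable hc).comp_sub_left x).mul_const Cb)
        filter_upwards with y
        rw [norm_mul, norm_Kc hc, RCLike.norm_conj]
        exact mul_le_mul_of_nonneg_left (hCb y) (Kr_nonneg _ _)
    _ = Cb := by
        rw [integral_mul_const, integral_sub_left_eq_self (Kr c) volume x,
          Kr_integral hc, one_mul]

/-- Plancherel's theorem for continuous compactly supported functions on `ℝ`. -/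
lemma plancherel (hg : Continuous g) (hgs : HasCompactSupport g) :
    ∫ x : ℝ, ‖g x‖ ^ 2 = ∫ ξ : ℝ, ‖𝓕 g ξ‖ ^ 2 := by
  have hgi : Integrable g := hg.integrable_of_hasCompactSupport hgs
  obtain ⟨Cb, hCb⟩ := hgs.exists_bound_of_continuous hg
  have hFgc : Continuous (𝓕 g) :=
    VectorFourier.fourierIntegral_continuous Real.continuous_fourierChar continuous_inner hgi
  set M : ℝ := ∫ y, ‖g y‖ with hM
  have hFgbd : ∀ ξ, ‖𝓕 g ξ‖ ≤ M := fun ξ =>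
    VectorFourier.norm_fourierIntegral_le_integral_norm _ _ _ _ _
  set wc : ℝ → ℝ → ℂ := fun c ξ => conj (𝓕 g ξ) * cexp (-(c : ℂ)⁻¹ * (ξ : ℂ) ^ 2) with hwc
  have hwci : ∀ c : ℝ, 0 < c → Integrable (wc c) := by
    intro c hc
    have h1 : Integrable (fun ξ : ℝ => cexp (-(c : ℂ)⁻¹ * (ξ : ℂ) ^ 2)) := by
      refine (integrable_exp_neg_mul_sq (show (0:ℝ) < c⁻¹ by positivity)).mono'
        (Continuous.aestronglyMeasurable (by fun_prop)) ?_
      filter_upwards with ξ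
      rw [Complex.norm_exp,
        show (-(c : ℂ)⁻¹ * (ξ : ℂ) ^ 2) = ((-c⁻¹ * ξ ^ 2 : ℝ) : ℂ) by push_cast; ring,
        Complex.ofReal_re]
    exact h1.bdd_mul (Complex.continuous_conj.comp hFgc).aestronglyMeasurable
      (Eventually.of_forall fun ξ => by rw [RCLike.norm_conj]; exact hFgbd ξ)
  set R : ℝ → ℝ := fun c => ∫ ξ : ℝ, ‖𝓕 g ξ‖ ^ 2 * rexp (-c⁻¹ * ξ ^ 2) with hR
  have hAc : ∀ c : ℝ, 0 < c → ∫ x, g x * 𝓕 (wc c) x = ((R c : ℝ) : ℂ) := by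
    intro c hc
    rw [← mult_formula hgi (hwci c hc)]
    simp only [hR]
    have hpt : ∀ ξ : ℝ, 𝓕 g ξ * wc c ξ = ((‖𝓕 g ξ‖ ^ 2 * rexp (-c⁻¹ * ξ ^ 2) : ℝ) : ℂ) := by
      intro ξ
      simp only [hwc]
      calc 𝓕 g ξ * (conj (𝓕 g ξ) * cexp (-(c : ℂ)⁻¹ * (ξ : ℂ) ^ 2))
          = (𝓕 g ξ * conj (𝓕 g ξ)) * cexp (-(c : ℂ)⁻¹ * (ξ : ℂ) ^ 2) := by ring
        _ = ((‖𝓕 g ξ‖ ^ 2 * rexp (-c⁻¹ * ξ ^ 2) : ℝ) : ℂ) := by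
            rw [Complex.mul_conj,
              show (-(c : ℂ)⁻¹ * (ξ : ℂ) ^ 2) = ((-c⁻¹ * ξ ^ 2 : ℝ) : ℂ) by push_cast; ring,
              ← Complex.ofReal_exp]
            rw [Complex.normSq_eq_norm_sq]
            norm_cast
    calc ∫ ξ : ℝ, 𝓕 g ξ * wc c ξ
        = ∫ ξ : ℝ, ((‖𝓕 g ξ‖ ^ 2 * rexp (-c⁻¹ * ξ ^ 2) : ℝ) : ℂ) := by simp_rw [hpt]
      _ = _ := integral_ofReal
  set L : ℝ := ∫ x : ℝ, ‖g x‖ ^ 2 with hLdef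
  have hLc : ∫ x, g x * conj (g x) = ((L : ℝ) : ℂ) := by
    have hpt : ∀ x : ℝ, g x * conj (g x) = ((‖g x‖ ^ 2 : ℝ) : ℂ) := by
      intro x
      rw [Complex.mul_conj, Complex.normSq_eq_norm_sq]
    simp only [hLdef]
    calc ∫ x : ℝ, g x * conj (g x) = ∫ x : ℝ, ((‖g x‖ ^ 2 : ℝ) : ℂ) := by simp_rw [hpt]
      _ = _ := integral_ofReal
  -- dominated convergence
  have hTend : Tendsto (fun c : ℝ => ∫ x, g x * 𝓕 (wc c) x) atTop
      (𝓝 (∫ x, g x * conj (g x))) := by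
    apply tendsto_integral_filter_of_dominated_convergence (fun x => ‖g x‖ * Cb)
    · filter_upwards [Ioi_mem_atTop (0:ℝ)] with c (hc : 0 < c)
      exact (hg.mul (VectorFourier.fourierIntegral_continuous Real.continuous_fourierChar
        continuous_inner (hwci c hc))).aestronglyMeasurable
    · filter_upwards [Ioi_mem_atTop (0:ℝ)] with c (hc : 0 < c)
      filter_upwards with x
      rw [norm_mul, stepA hg hgs hc x]
      exact mul_le_mul_of_nonneg_left (stepC hg hCb hc x) (norm_nonneg _)
    · exact (hg.norm.integrable_of_hasCompactSupport hgs.norm).mul_const Cb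
    · filter_upwards with x
      have h1 : Tendsto (fun c : ℝ => g x * ∫ y, Kc c x y * conj (g y)) atTop
          (𝓝 (g x * conj (g x))) := (stepB hg hgs x).const_mul (g x)
      apply h1.congr'
      filter_upwards [Ioi_mem_atTop (0:ℝ)] with c (hc : 0 < c)
      rw [stepA hg hgs hc x]
  have hRTend : Tendsto R atTop (𝓝 L) := by
    have h2 : Tendsto (fun c : ℝ => ((R c : ℝ) : ℂ)) atTop (𝓝 ((L : ℝ) : ℂ)) := by
      rw [← hLc]
      apply hTend.congr'
      filter_upwards [Ioi_mem_atTop (0:ℝ)] with c (hc : 0 < c)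
      exact hAc c hc
    have := (Complex.continuous_re.tendsto _).comp h2
    exact this
  -- monotone convergence
  have hseq : Tendsto (fun n : ℕ => ((n : ℝ) + 1)) atTop atTop :=
    tendsto_atTop_add_const_right _ 1 tendsto_natCast_atTop_atTop
  have hmono : Tendsto (fun n : ℕ => ∫⁻ ξ : ℝ, ENNReal.ofReal (‖𝓕 g ξ‖ ^ 2 *
      rexp (-((n : ℝ) + 1)⁻¹ * ξ ^ 2))) atTop (𝓝 (∫⁻ ξ : ℝ, ENNReal.ofReal (‖𝓕 g ξ‖ ^ 2))) := by
    apply lintegral_tendsto_of_tendsto_of_monotone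
    · intro n
      apply ENNReal.measurable_ofReal.comp_aemeasurable
      exact ((hFgc.norm.pow 2).mul (by fun_prop)).aemeasurable
    · filter_upwards with ξ
      intro m n hmn
      apply ENNReal.ofReal_le_ofReal
      apply mul_le_mul_of_nonneg_left _ (by positivity)
      apply Real.exp_le_exp.2
      have hle : ((n : ℝ) + 1)⁻¹ ≤ ((m : ℝ) + 1)⁻¹ := by
        apply inv_anti₀ (by positivity)
        have : (m : ℝ) ≤ (n : ℝ) := Nat.cast_le.2 hmn
        linarith
      nlinarith [sq_nonneg ξ]
    · filter_upwards with ξ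
      have harg : Tendsto (fun n : ℕ => -((n : ℝ) + 1)⁻¹ * ξ ^ 2) atTop (𝓝 0) := by
        simpa using ((tendsto_inv_atTop_zero.comp hseq).neg.mul_const (ξ ^ 2))
      have h3 : Tendsto (fun n : ℕ => rexp (-((n : ℝ) + 1)⁻¹ * ξ ^ 2)) atTop (𝓝 1) := by
        simpa [Function.comp_def] using (Real.continuous_exp.tendsto 0).comp harg
      have h4 : Tendsto (fun n : ℕ => ‖𝓕 g ξ‖ ^ 2 * rexp (-((n : ℝ) + 1)⁻¹ * ξ ^ 2)) atTop
          (𝓝 (‖𝓕 g ξ‖ ^ 2)) := by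
        simpa using h3.const_mul (‖𝓕 g ξ‖ ^ 2)
      exact (ENNReal.continuous_ofReal.tendsto _).comp h4
  have hRint : ∀ c : ℝ, 0 < c → Integrable (fun ξ : ℝ => ‖𝓕 g ξ‖ ^ 2 * rexp (-c⁻¹ * ξ ^ 2)) := by
    intro c hc
    refine (integrable_exp_neg_mul_sq (show (0:ℝ) < c⁻¹ by positivity)).bdd_mul (c := M ^ 2)
      ((hFgc.norm.pow 2).aestronglyMeasurable) (Eventually.of_forall fun ξ => ?_)
    rw [norm_pow, norm_norm]
    exact pow_le_pow_left₀ (norm_nonneg _) (hFgbd ξ) 2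
  have hlin : ∀ n : ℕ, ∫⁻ ξ : ℝ, ENNReal.ofReal (‖𝓕 g ξ‖ ^ 2 * rexp (-((n : ℝ) + 1)⁻¹ * ξ ^ 2))
      = ENNReal.ofReal (R ((n : ℝ) + 1)) := by
    intro n
    rw [hR, ← ofReal_integral_eq_lintegral_ofReal (hRint _ (by positivity))]
    filter_upwards with ξ
    positivity
  have hkey : ∫⁻ ξ : ℝ, ENNReal.ofReal (‖𝓕 g ξ‖ ^ 2) = ENNReal.ofReal L := by
    have h5 : Tendsto (fun n : ℕ => ENNReal.ofReal (R ((n : ℝ) + 1))) atTop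
        (𝓝 (ENNReal.ofReal L)) := (ENNReal.continuous_ofReal.tendsto _).comp (hRTend.comp hseq)
    simp only [hlin] at hmono
    exact tendsto_nhds_unique hmono h5
  have hL0 : 0 ≤ L := integral_nonneg (fun x => by positivity)
  have hint : Integrable (fun ξ : ℝ => ‖𝓕 g ξ‖ ^ 2) := by
    refine ⟨(hFgc.norm.pow 2).aestronglyMeasurable, ?_⟩
    rw [hasFiniteIntegral_iff_norm]
    have : ∫⁻ ξ : ℝ, ENNReal.ofReal ‖‖𝓕 g ξ‖ ^ 2‖ = ∫⁻ ξ : ℝ, ENNReal.ofReal (‖𝓕 g ξ‖ ^ 2) :=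
      lintegral_congr fun ξ => by rw [Real.norm_of_nonneg (by positivity)]
    rw [this, hkey]
    exact ENNReal.ofReal_lt_top
  rw [show ∫ ξ : ℝ, ‖𝓕 g ξ‖ ^ 2 = L from ?_]
  · rw [integral_eq_lintegral_of_nonneg_ae (f := fun ξ => ‖𝓕 g ξ‖ ^ 2) (Eventually.of_forall fun ξ => by positivity)
      (hFgc.norm.pow 2).aestronglyMeasurable, hkey, ENNReal.toReal_ofReal hL0]

end Plancherel

end Stmt10Aux

/-- Plancherel for the Mellin transform on the line `Re s = 1/2`: if
`f : ℝ → ℂ` is continuous with compact support contained in `(0,∞)`, then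
`∫_0^∞ |f(t)|² dt = (1/2π) ∫_ℝ |Mf(1/2 + iτ)|² dτ`. -/
theorem stmt10 (f : ℝ → ℂ) (hf : Continuous f) (hsupp : HasCompactSupport f)
    (hpos : tsupport f ⊆ Set.Ioi (0 : ℝ)) :
    ∫ t in Set.Ioi (0 : ℝ), ‖f t‖ ^ 2 =
      (1 / (2 * Real.pi)) * ∫ τ : ℝ, ‖mellin f (1 / 2 + τ * I)‖ ^ 2 := by
  set g : ℝ → ℂ := fun u => Real.exp (-(2⁻¹ : ℝ) * u) • f (Real.exp (-u)) with hgdef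
  have hgc : Continuous g := by
    rw [hgdef]
    apply Continuous.fun_smul
    · fun_prop
    · exact hf.comp (by fun_prop)
  have hgs : HasCompactSupport g := by
    have hsub : tsupport f ⊆ ({0} : Set ℝ)ᶜ := fun t ht =>
      Set.mem_compl_singleton_iff.mpr (ne_of_gt (hpos ht))
    have hS : IsCompact ((fun t => -Real.log t) '' tsupport f) :=
      hsupp.image_of_continuousOn ((Real.continuousOn_log.mono hsub).neg)
    apply HasCompactSupport.intro hS
    intro x hx
    by_contra hne
    have hfne : f (rexp (-x)) ≠ 0 := by
      intro h0
      apply hne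
      simp [hgdef, h0]
    have hmem : rexp (-x) ∈ tsupport f := subset_tsupport f hfne
    exact hx ⟨rexp (-x), hmem, by simp [Real.log_exp]⟩
  have key := Stmt10Aux.plancherel hgc hgs
  have hmel : ∀ τ : ℝ, mellin f (1 / 2 + τ * I) = 𝓕 g (τ / (2 * π)) := by
    intro τ
    have h1 : (1 / 2 + (τ : ℂ) * I).re = -(-(2⁻¹ : ℝ)) := by simp
    have h2 : (1 / 2 + (τ : ℂ) * I).im = τ := by simp
    rw [mellin_eq_fourier, h1, h2, hgdef]
    norm_num
  have hRHS : ∫ τ : ℝ, ‖mellin f (1 / 2 + τ * I)‖ ^ 2 = (2 * π) * ∫ ξ : ℝ, ‖𝓕 g ξ‖ ^ 2 := by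
    calc ∫ τ : ℝ, ‖mellin f (1 / 2 + τ * I)‖ ^ 2
        = ∫ τ : ℝ, (fun ξ => ‖𝓕 g ξ‖ ^ 2) (τ / (2 * π)) := by simp_rw [hmel]
      _ = |2 * π| • ∫ ξ : ℝ, ‖𝓕 g ξ‖ ^ 2 := Measure.integral_comp_div (fun ξ => ‖𝓕 g ξ‖ ^ 2) (2 * π)
      _ = (2 * π) * ∫ ξ : ℝ, ‖𝓕 g ξ‖ ^ 2 := by
          rw [abs_of_pos (by positivity), smul_eq_mul]
  have hderiv : ∀ x ∈ (Set.univ : Set ℝ),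
      HasDerivWithinAt (fun x : ℝ => rexp (-x)) (-rexp (-x)) Set.univ x := fun x _ =>
    (mul_neg_one (rexp (-x)) ▸
      ((Real.hasDerivAt_exp (-x)).comp x (hasDerivAt_neg x)).hasDerivWithinAt)
  have himg : (fun x : ℝ => rexp (-x)) '' Set.univ = Set.Ioi 0 := by
    rw [show (fun x : ℝ => rexp (-x)) = rexp ∘ Neg.neg from rfl, Set.image_comp,
      Set.image_univ_of_surjective neg_surjective, Set.image_univ, Real.range_exp]
  have hinj : Set.InjOn (fun x : ℝ => rexp (-x)) Set.univ :=
    (Real.exp_injective.comp neg_injective).injOn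
  have hLHS : ∫ t in Set.Ioi (0 : ℝ), ‖f t‖ ^ 2 = ∫ x : ℝ, ‖g x‖ ^ 2 := by
    calc ∫ t in Set.Ioi (0 : ℝ), ‖f t‖ ^ 2
        = ∫ x in (Set.univ : Set ℝ), |(-rexp (-x))| • ‖f (rexp (-x))‖ ^ 2 := by
          rw [← himg, integral_image_eq_integral_abs_deriv_smul MeasurableSet.univ hderiv hinj]
      _ = ∫ x : ℝ, ‖g x‖ ^ 2 := by
          rw [setIntegral_univ]
          congr 1; funext x
          rw [abs_neg, abs_of_pos (Real.exp_pos _), smul_eq_mul, hgdef]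
          simp only [norm_smul, Real.norm_eq_abs, abs_of_pos (Real.exp_pos _)]
          rw [mul_pow, sq (rexp (-(2⁻¹:ℝ) * x)), ← Real.exp_add]
          congr 2
          ring
  rw [hLHS, hRHS, key]
  have hπ : π ≠ 0 := Real.pi_ne_zero
  field_simp
end

section
/- Let n ≥ 1, let B ⊂ ℝⁿ be a closed ball of positive radius, and let φ : ℝⁿ → ℝ be continuous with support contained in B and ∫_B φ ≠ 0. Then there exists a constant C < ∞ such that for every continuously differentiable u : ℝⁿ → ℝ satisfying ∫_B u·φ = 0, one has ∫_B |u|² ≤ C·∫_B |∇u|². -/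
open MeasureTheory Set

section helpers

private lemma csq {α : Type*} [MeasurableSpace α] (μ : Measure α) [IsFiniteMeasure μ] {f : α → ℝ}
    (hf : Integrable f μ) (hf2 : Integrable (fun a => f a ^ 2) μ) :
    (∫ a, f a ∂μ) ^ 2 ≤ (μ Set.univ).toReal * ∫ a, f a ^ 2 ∂μ := by
  have habs : |∫ a, f a ∂μ| ≤ ∫ a, |f a| ∂μ := by
    simpa [Real.norm_eq_abs] using norm_integral_le_integral_norm (μ := μ) f
  have h1 : (∫ a, f a ∂μ) ^ 2 ≤ (∫ a, |f a| ∂μ) ^ 2 := by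
    rw [← sq_abs (∫ a, f a ∂μ)]
    exact pow_le_pow_left₀ (abs_nonneg _) habs 2
  have hpq : Real.HolderConjugate 2 2 := by
    rw [Real.holderConjugate_iff]; norm_num
  have hmf : AEStronglyMeasurable (fun a => |f a|) μ := by
    simpa [Real.norm_eq_abs] using hf.1.norm
  have hml : MemLp (fun a => |f a|) (ENNReal.ofReal 2) μ := by
    rw [show ENNReal.ofReal 2 = 2 by norm_num]
    refine (memLp_two_iff_integrable_sq hmf).2 ?_
    simpa [sq_abs] using hf2
  have hmg : MemLp (fun _ : α => (1:ℝ)) (ENNReal.ofReal 2) μ := memLp_const 1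
  have hH := integral_mul_le_Lp_mul_Lq_of_nonneg (μ := μ) hpq
      (Filter.Eventually.of_forall fun a => abs_nonneg (f a))
      (Filter.Eventually.of_forall fun _ => zero_le_one) hml hmg
  simp only [mul_one, Real.one_rpow, integral_const, smul_eq_mul] at hH
  have hrw : ∀ a, |f a| ^ (2:ℝ) = f a ^ 2 := by
    intro a
    rw [show (2:ℝ) = ((2:ℕ):ℝ) by norm_num, Real.rpow_natCast, sq_abs]
  simp only [hrw] at hH
  have hA0 : 0 ≤ ∫ a, f a ^ 2 ∂μ := integral_nonneg fun a => sq_nonneg _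
  have hm0 : 0 ≤ (μ Set.univ).toReal := ENNReal.toReal_nonneg
  have h2 : (∫ a, |f a| ∂μ) ^ 2
      ≤ ((∫ a, f a ^ 2 ∂μ) ^ (1/2:ℝ) * ((μ Set.univ).toReal) ^ (1/2:ℝ)) ^ 2 := by
    refine pow_le_pow_left₀ (integral_nonneg fun a => abs_nonneg _) ?_ 2
    exact hH
  refine h1.trans (h2.trans (le_of_eq ?_))
  rw [← Real.mul_rpow hA0 hm0, ← Real.rpow_natCast (_ ^ (1/2:ℝ)) 2,
    ← Real.rpow_mul (mul_nonneg hA0 hm0)]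
  norm_num [mul_comm]

variable {n : ℕ} {x₀ : EuclideanSpace ℝ (Fin n)} {R : ℝ}

private lemma chord {u : EuclideanSpace ℝ (Fin n) → ℝ} (hu : ContDiff ℝ 1 u)
    {x y : EuclideanSpace ℝ (Fin n)} (hx : x ∈ Metric.closedBall x₀ R)
    (hy : y ∈ Metric.closedBall x₀ R) :
    |u x - u y| ≤ 2 * R * ∫ t in (0:ℝ)..1, ‖fderiv ℝ u (y + t • (x - y))‖ := by
  have hud : Differentiable ℝ u := hu.differentiable one_ne_zero
  have hgc : Continuous fun z => ‖fderiv ℝ u z‖ := (hu.continuous_fderiv one_ne_zero).norm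
  have hpc : Continuous fun t : ℝ => y + t • (x - y) := by fun_prop
  have hline : ∀ t : ℝ, HasDerivAt (fun s : ℝ => u (y + s • (x - y)))
      ((fderiv ℝ u (y + t • (x - y))) (x - y)) t := by
    intro t
    have h1 : HasDerivAt (fun s : ℝ => y + s • (x - y)) (x - y) t := by
      simpa using ((hasDerivAt_id t).smul_const (x - y)).const_add y
    exact ((hud _).hasFDerivAt).comp_hasDerivAt t h1
  have hDc : Continuous fun t : ℝ => (fderiv ℝ u (y + t • (x - y))) (x - y) :=
    ((hu.continuous_fderiv one_ne_zero).comp hpc).clm_apply continuous_const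
  have hftc := intervalIntegral.integral_eq_sub_of_hasDerivAt
      (fun t _ => hline t) (hDc.intervalIntegrable 0 1)
  have hxy : ‖x - y‖ ≤ 2 * R := by
    rw [← dist_eq_norm]
    calc dist x y ≤ dist x x₀ + dist x₀ y := dist_triangle x x₀ y
      _ ≤ R + R := add_le_add (Metric.mem_closedBall.1 hx) (by
          rw [dist_comm]; exact Metric.mem_closedBall.1 hy)
      _ = 2 * R := by ring
  have hval : u x - u y = ∫ t in (0:ℝ)..1, (fderiv ℝ u (y + t • (x - y))) (x - y) := by
    rw [hftc]; simp
  rw [hval]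
  calc |∫ t in (0:ℝ)..1, (fderiv ℝ u (y + t • (x - y))) (x - y)|
      ≤ ∫ t in (0:ℝ)..1, |(fderiv ℝ u (y + t • (x - y))) (x - y)| := by
        simpa [Real.norm_eq_abs] using
          intervalIntegral.norm_integral_le_integral_norm (μ := volume)
            (f := fun t : ℝ => (fderiv ℝ u (y + t • (x - y))) (x - y)) zero_le_one
    _ ≤ ∫ t in (0:ℝ)..1, 2 * R * ‖fderiv ℝ u (y + t • (x - y))‖ := by
        refine intervalIntegral.integral_mono_on zero_le_one
          (hDc.abs.intervalIntegrable 0 1)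
          ((continuous_const.mul (hgc.comp hpc)).intervalIntegrable 0 1)
          fun t _ => ?_
        calc |(fderiv ℝ u (y + t • (x - y))) (x - y)|
            ≤ ‖fderiv ℝ u (y + t • (x - y))‖ * ‖x - y‖ := by
              simpa [Real.norm_eq_abs] using (fderiv ℝ u (y + t • (x - y))).le_opNorm (x - y)
          _ ≤ ‖fderiv ℝ u (y + t • (x - y))‖ * (2 * R) :=
              mul_le_mul_of_nonneg_left hxy (norm_nonneg _)
          _ = 2 * R * ‖fderiv ℝ u (y + t • (x - y))‖ := by ring
    _ = 2 * R * ∫ t in (0:ℝ)..1, ‖fderiv ℝ u (y + t • (x - y))‖ := by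
        rw [← intervalIntegral.integral_const_mul]

private lemma inner_bd {g : EuclideanSpace ℝ (Fin n) → ℝ} (hgc : Continuous g)
    (c : ℝ) (v : EuclideanSpace ℝ (Fin n)) (hc : 1/2 ≤ c)
    (hmem : ∀ w ∈ Metric.closedBall x₀ R, c • w + v ∈ Metric.closedBall x₀ R) :
    ∫ w in Metric.closedBall x₀ R, g (c • w + v) ^ 2
      ≤ 2 ^ n * ∫ z in Metric.closedBall x₀ R, g z ^ 2 := by
  set B := Metric.closedBall x₀ R with hB
  have hBmeas : MeasurableSet B := measurableSet_closedBall
  have hBcomp : IsCompact B := isCompact_closedBall x₀ R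
  have hAint : IntegrableOn (fun z => g z ^ 2) B volume :=
    ((hgc.pow 2).continuousOn).integrableOn_compact hBcomp
  have hA0 : 0 ≤ ∫ z in B, g z ^ 2 := integral_nonneg fun z => sq_nonneg _
  set G : EuclideanSpace ℝ (Fin n) → ℝ := B.indicator (fun z => g z ^ 2) with hG
  have hGint : Integrable G volume := hAint.integrable_indicator hBmeas
  have hG0 : ∀ z, 0 ≤ G z := fun z => Set.indicator_nonneg (fun z _ => sq_nonneg _) z
  have h0c : (0:ℝ) < c := lt_of_lt_of_le (by norm_num) hc
  have hGv : Integrable (fun w => G (w + v)) volume := hGint.comp_add_right v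
  have hGcv : Integrable (fun w => G (c • w + v)) volume := hGv.comp_smul h0c.ne'
  have step1 : ∫ w in B, g (c • w + v) ^ 2 = ∫ w in B, G (c • w + v) := by
    refine setIntegral_congr_fun hBmeas fun w hw => ?_
    rw [hG, Set.indicator_of_mem (hmem w hw)]
  have step2 : ∫ w in B, G (c • w + v) ≤ ∫ w, G (c • w + v) :=
    setIntegral_le_integral hGcv (Filter.Eventually.of_forall fun w => hG0 _)
  have step3 : ∫ w, G (c • w + v) = |((c:ℝ) ^ n)⁻¹| * ∫ w, G w := by
    have h := Measure.integral_comp_smul (volume : Measure (EuclideanSpace ℝ (Fin n)))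
      (fun w => G (w + v)) c
    rw [finrank_euclideanSpace_fin] at h
    calc ∫ w, G (c • w + v) = ∫ w, (fun z => G (z + v)) (c • w) := rfl
      _ = |((c:ℝ) ^ n)⁻¹| • ∫ w, G (w + v) := h
      _ = |((c:ℝ) ^ n)⁻¹| * ∫ w, G w := by
          rw [integral_add_right_eq_self (fun w => G w) v]; rfl
  have step4 : ∫ w, G w = ∫ z in B, g z ^ 2 := integral_indicator hBmeas
  have hcn : |((c:ℝ) ^ n)⁻¹| ≤ 2 ^ n := by
    rw [abs_of_nonneg (inv_nonneg.2 (pow_nonneg h0c.le n))]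
    have h1 : ((1:ℝ)/2) ^ n ≤ c ^ n := pow_le_pow_left₀ (by norm_num) hc n
    have h2 : (0:ℝ) < (1/2) ^ n := pow_pos (by norm_num) n
    calc (c ^ n)⁻¹ ≤ (((1:ℝ)/2) ^ n)⁻¹ := inv_anti₀ h2 h1
      _ = 2 ^ n := by rw [one_div, inv_pow, inv_inv]
  calc ∫ w in B, g (c • w + v) ^ 2 = ∫ w in B, G (c • w + v) := step1
    _ ≤ ∫ w, G (c • w + v) := step2
    _ = |((c:ℝ) ^ n)⁻¹| * ∫ w, G w := step3
    _ ≤ 2 ^ n * ∫ z in B, g z ^ 2 := by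
        rw [step4]; exact mul_le_mul_of_nonneg_right hcn hA0

end helpers

set_option maxHeartbeats 1000000 in
/-- weighted Poincaré inequality. Let `B ⊂ ℝⁿ` (`n ≥ 1`) be a closed ball of
positive radius and `φ` a continuous function supported in `B` with `∫_B φ ≠ 0`. Then there
is `C < ∞` such that every `C¹` function `u` with `∫_B u·φ = 0` satisfies
`∫_B |u|² ≤ C ∫_B |∇u|²`. -/
theorem stmt19 (n : ℕ) (hn : 1 ≤ n) (x₀ : EuclideanSpace ℝ (Fin n)) (R : ℝ) (hR : 0 < R)
    (φ : EuclideanSpace ℝ (Fin n) → ℝ) (hφc : Continuous φ)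
    (hφs : tsupport φ ⊆ Metric.closedBall x₀ R)
    (hφi : (∫ x in Metric.closedBall x₀ R, φ x) ≠ 0) :
    ∃ C : ℝ, ∀ u : EuclideanSpace ℝ (Fin n) → ℝ, ContDiff ℝ 1 u →
      (∫ x in Metric.closedBall x₀ R, u x * φ x) = 0 →
      ∫ x in Metric.closedBall x₀ R, (u x) ^ 2
        ≤ C * ∫ x in Metric.closedBall x₀ R, ‖fderiv ℝ u x‖ ^ 2 := by
  classical
  set B := Metric.closedBall x₀ R with hB
  have hBmeas : MeasurableSet B := measurableSet_closedBall
  have hBcomp : IsCompact B := isCompact_closedBall x₀ R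
  have hBconv : Convex ℝ B := convex_closedBall x₀ R
  set vB : ℝ := (volume B).toReal with hvB
  have hvB0 : 0 ≤ vB := ENNReal.toReal_nonneg
  haveI hfinB : IsFiniteMeasure (volume.restrict B) :=
    ⟨by rw [Measure.restrict_apply_univ]; exact hBcomp.measure_lt_top⟩
  haveI hfinI : IsFiniteMeasure (volume.restrict (Ioc (0:ℝ) 1)) :=
    ⟨by rw [Measure.restrict_apply_univ, Real.volume_Ioc]; norm_num⟩
  -- bound for φ
  have hφsupp : HasCompactSupport φ :=
    IsCompact.of_isClosed_subset hBcomp (isClosed_tsupport φ) hφs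
  obtain ⟨M, hM⟩ := hφsupp.exists_bound_of_continuous hφc
  have hM0 : 0 ≤ M := (norm_nonneg _).trans (hM x₀)
  set δ : ℝ := |∫ x in B, φ x| with hδdef
  have hδ : 0 < δ := abs_pos.2 hφi
  refine ⟨(2*R*M/δ)^2 * vB * (vB * 2^n), ?_⟩
  intro u hu hu0
  set g : EuclideanSpace ℝ (Fin n) → ℝ := fun z => ‖fderiv ℝ u z‖ with hgdef
  have hgc : Continuous g := (hu.continuous_fderiv one_ne_zero).norm
  have hg0 : ∀ z, 0 ≤ g z := fun z => norm_nonneg _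
  have huc : Continuous u := hu.continuous
  set A : ℝ := ∫ z in B, g z ^ 2 with hA
  have hA0 : 0 ≤ A := integral_nonneg fun z => sq_nonneg _
  -- the two parametric integrals
  set P : EuclideanSpace ℝ (Fin n) × EuclideanSpace ℝ (Fin n) → ℝ :=
    fun p => ∫ t in (0:ℝ)..1, g (p.2 + t • (p.1 - p.2)) with hPdef
  set Q : EuclideanSpace ℝ (Fin n) × EuclideanSpace ℝ (Fin n) → ℝ :=
    fun p => ∫ t in (0:ℝ)..1, g (p.2 + t • (p.1 - p.2)) ^ 2 with hQdef
  have hPc : Continuous P := by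
    apply intervalIntegral.continuous_parametric_intervalIntegral_of_continuous'
      (f := fun (p : EuclideanSpace ℝ (Fin n) × EuclideanSpace ℝ (Fin n)) (t : ℝ) =>
        g (p.2 + t • (p.1 - p.2))) (μ := volume)
    fun_prop
  have hQc : Continuous Q := by
    apply intervalIntegral.continuous_parametric_intervalIntegral_of_continuous'
      (f := fun (p : EuclideanSpace ℝ (Fin n) × EuclideanSpace ℝ (Fin n)) (t : ℝ) =>
        g (p.2 + t • (p.1 - p.2)) ^ 2) (μ := volume)
    fun_prop
  have hP0 : ∀ p, 0 ≤ P p := fun p =>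
    intervalIntegral.integral_nonneg zero_le_one fun t _ => hg0 _
  have halg : ∀ (t : ℝ) (x y : EuclideanSpace ℝ (Fin n)),
      y + t • (x - y) = (1-t) • y + t • x := by
    intro t x y
    rw [smul_sub, sub_smul, one_smul]
    abel
  -- Step A: pointwise bound via the weighted mean zero condition
  have key1 : ∀ x ∈ B, |u x| ≤ (2*R*M/δ) * ∫ y in B, P (x, y) := by
    intro x hx
    have hint1 : IntegrableOn (fun y => u x * φ y) B volume :=
      ((continuous_const.mul hφc).continuousOn).integrableOn_compact hBcomp
    have hint2 : IntegrableOn (fun y => u y * φ y) B volume :=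
      ((huc.mul hφc).continuousOn).integrableOn_compact hBcomp
    have e0 : ∫ y in B, (u x - u y) * φ y = u x * ∫ y in B, φ y := by
      have e : (fun y => (u x - u y) * φ y) = fun y => u x * φ y - u y * φ y := by
        funext y; ring
      rw [e, integral_sub hint1 hint2, hu0, sub_zero, integral_const_mul]
    have hPyc : Continuous fun y => P (x, y) :=
      hPc.comp (continuous_const.prodMk continuous_id)
    have habs : |u x| * δ ≤ (2*R*M) * ∫ y in B, P (x, y) := by
      calc |u x| * δ = |∫ y in B, (u x - u y) * φ y| := by
            rw [e0, abs_mul, hδdef]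
        _ ≤ ∫ y in B, |u x - u y| * |φ y| := by
            simpa [Real.norm_eq_abs] using
              norm_integral_le_integral_norm (μ := volume.restrict B)
                (fun y => (u x - u y) * φ y)
        _ ≤ ∫ y in B, (2*R*M) * P (x, y) := by
            refine setIntegral_mono_on
              ((((continuous_const.sub huc).abs.mul hφc.abs).continuousOn).integrableOn_compact hBcomp)
              ((continuous_const.mul hPyc).continuousOn.integrableOn_compact hBcomp)
              hBmeas fun y hy => ?_
            have h1 : |u x - u y| ≤ 2 * R * P (x, y) := chord hu hx hy
            have h2 : |φ y| ≤ M := by rw [← Real.norm_eq_abs]; exact hM y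
            calc |u x - u y| * |φ y| ≤ (2 * R * P (x, y)) * M :=
                  mul_le_mul h1 h2 (abs_nonneg _)
                    (mul_nonneg (by positivity) (hP0 _))
              _ = (2*R*M) * P (x, y) := by ring
        _ = (2*R*M) * ∫ y in B, P (x, y) := integral_const_mul _ _
    rw [div_mul_eq_mul_div]
    exact (le_div_iff₀ hδ).2 habs
  -- Cauchy–Schwarz in t
  have keyCS : ∀ p : EuclideanSpace ℝ (Fin n) × EuclideanSpace ℝ (Fin n), P p ^ 2 ≤ Q p := by
    intro p
    have hfc : Continuous fun t : ℝ => g (p.2 + t • (p.1 - p.2)) := by fun_prop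
    have hint : IntegrableOn (fun t : ℝ => g (p.2 + t • (p.1 - p.2))) (Ioc 0 1) volume :=
      (hfc.continuousOn.integrableOn_compact isCompact_Icc).mono_set Ioc_subset_Icc_self
    have hint2 : IntegrableOn (fun t : ℝ => g (p.2 + t • (p.1 - p.2)) ^ 2) (Ioc 0 1) volume :=
      ((hfc.pow 2).continuousOn.integrableOn_compact isCompact_Icc).mono_set Ioc_subset_Icc_self
    have h := csq (volume.restrict (Ioc (0:ℝ) 1))
      (f := fun t : ℝ => g (p.2 + t • (p.1 - p.2))) hint hint2
    have hone : ((volume.restrict (Ioc (0:ℝ) 1)) Set.univ).toReal = 1 := by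
      rw [Measure.restrict_apply_univ, Real.volume_Ioc]; norm_num
    rw [hone, one_mul] at h
    show P p ^ 2 ≤ Q p
    rw [hPdef, hQdef]
    simpa [intervalIntegral.integral_of_le zero_le_one] using h
  -- Step A + Cauchy–Schwarz in y
  have key2 : ∀ x ∈ B, u x ^ 2 ≤ (2*R*M/δ)^2 * vB * ∫ y in B, Q (x, y) := by
    intro x hx
    have hPyc : Continuous fun y => P (x, y) :=
      hPc.comp (continuous_const.prodMk continuous_id)
    have hQyc : Continuous fun y => Q (x, y) :=
      hQc.comp (continuous_const.prodMk continuous_id)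
    have hPyint : IntegrableOn (fun y => P (x, y)) B volume :=
      hPyc.continuousOn.integrableOn_compact hBcomp
    have hPyint2 : IntegrableOn (fun y => P (x, y) ^ 2) B volume :=
      (hPyc.pow 2).continuousOn.integrableOn_compact hBcomp
    have hQyint : IntegrableOn (fun y => Q (x, y)) B volume :=
      hQyc.continuousOn.integrableOn_compact hBcomp
    have hcs := csq (volume.restrict B) (f := fun y => P (x, y)) hPyint hPyint2
    rw [Measure.restrict_apply_univ] at hcs
    have hPQ : ∫ y in B, P (x, y) ^ 2 ≤ ∫ y in B, Q (x, y) :=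
      setIntegral_mono_on hPyint2 hQyint hBmeas fun y _ => keyCS (x, y)
    have h1 : u x ^ 2 ≤ (2*R*M/δ)^2 * (∫ y in B, P (x, y)) ^ 2 := by
      rw [← sq_abs (u x), ← mul_pow]
      exact pow_le_pow_left₀ (abs_nonneg _) (key1 x hx) 2
    refine h1.trans ?_
    have h2 : vB * ∫ y in B, P (x, y) ^ 2 ≤ vB * ∫ y in B, Q (x, y) :=
      mul_le_mul_of_nonneg_left hPQ hvB0
    calc (2*R*M/δ)^2 * (∫ y in B, P (x, y)) ^ 2
        ≤ (2*R*M/δ)^2 * (vB * ∫ y in B, Q (x, y)) :=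
          mul_le_mul_of_nonneg_left (hcs.trans h2) (sq_nonneg _)
      _ = (2*R*M/δ)^2 * vB * ∫ y in B, Q (x, y) := by ring
  -- integrate over x and apply Fubini
  set ρ : Measure (EuclideanSpace ℝ (Fin n) × EuclideanSpace ℝ (Fin n)) :=
    (volume.restrict B).prod (volume.restrict B) with hρdef
  have hρ : ρ = ((volume : Measure (EuclideanSpace ℝ (Fin n))).prod volume).restrict (B ×ˢ B) :=
    Measure.prod_restrict B B
  have hQint2 : Integrable Q ρ := by
    rw [hρ]
    exact hQc.continuousOn.integrableOn_compact (hBcomp.prod hBcomp)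
  have hu2int : IntegrableOn (fun x => u x ^ 2) B volume :=
    ((huc.pow 2).continuousOn).integrableOn_compact hBcomp
  have hmarg : Integrable (fun x => ∫ y, Q (x, y) ∂(volume.restrict B)) (volume.restrict B) :=
    hQint2.integral_prod_left
  have step_outer : ∫ x in B, u x ^ 2 ≤ (2*R*M/δ)^2 * vB * ∫ p, Q p ∂ρ := by
    have h := setIntegral_mono_on hu2int
      (hmarg.const_mul ((2*R*M/δ)^2 * vB)) hBmeas key2
    rw [integral_const_mul] at h
    refine h.trans (le_of_eq ?_)
    congr 1
    rw [hρdef, MeasureTheory.integral_prod _ hQint2]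
  -- Fubini in t and the per-slice change of variables bound
  set H : (EuclideanSpace ℝ (Fin n) × EuclideanSpace ℝ (Fin n)) → ℝ → ℝ :=
    fun p t => g (p.2 + t • (p.1 - p.2)) ^ 2 with hHdef
  have hHcont : Continuous (Function.uncurry H) := by
    rw [hHdef]; fun_prop
  have hHint : Integrable (Function.uncurry H) (ρ.prod (volume.restrict (Ioc (0:ℝ) 1))) := by
    rw [hρ, Measure.prod_restrict]
    exact (hHcont.continuousOn.integrableOn_compact
      ((hBcomp.prod hBcomp).prod isCompact_Icc)).mono_set
      (Set.prod_mono_right Ioc_subset_Icc_self)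
  have hQH : ∀ p, Q p = ∫ t in Ioc (0:ℝ) 1, H p t := by
    intro p
    show (∫ t in (0:ℝ)..1, g (p.2 + t • (p.1 - p.2)) ^ 2) = _
    rw [intervalIntegral.integral_of_le zero_le_one]
  have hswap : ∫ p, Q p ∂ρ = ∫ t in Ioc (0:ℝ) 1, ∫ p, H p t ∂ρ := by
    simp_rw [hQH]
    exact MeasureTheory.integral_integral_swap hHint
  -- per-t bound
  have perT : ∀ t ∈ Ioc (0:ℝ) 1, ∫ p, H p t ∂ρ ≤ vB * (2^n * A) := by
    intro t ht
    have hHtc : Continuous fun p : EuclideanSpace ℝ (Fin n) × EuclideanSpace ℝ (Fin n) =>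
        H p t := by rw [hHdef]; fun_prop
    have hHtint : Integrable (fun p => H p t) ρ := by
      rw [hρ]
      exact hHtc.continuousOn.integrableOn_compact (hBcomp.prod hBcomp)
    by_cases hhalf : t ≤ 1/2
    · -- substitute in y
      rw [hρdef, MeasureTheory.integral_prod _ hHtint]
      have hinner : ∀ x ∈ B, ∫ y in B, H (x, y) t ≤ 2^n * A := by
        intro x hx
        have e : ∫ y in B, H (x, y) t = ∫ y in B, g ((1-t) • y + t • x) ^ 2 := by
          refine setIntegral_congr_fun hBmeas fun y _ => ?_
          rw [hHdef]; simp only; rw [halg]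
        rw [e]
        exact inner_bd hgc (1-t) (t • x) (by linarith)
          (fun w hw => hBconv hw hx (by linarith [ht.2]) ht.1.le (by ring))
      calc ∫ x in B, ∫ y in B, H (x, y) t
          ≤ ∫ x in B, 2^n * A := by
            refine setIntegral_mono_on hHtint.integral_prod_left
              (integrableOn_const hBcomp.measure_lt_top.ne) hBmeas hinner
        _ = vB * (2^n * A) := by
            rw [setIntegral_const, hvB, smul_eq_mul]; rfl
    · -- substitute in x
      rw [hρdef, MeasureTheory.integral_prod_symm _ hHtint]
      have hinner : ∀ y ∈ B, ∫ x in B, H (x, y) t ≤ 2^n * A := by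
        intro y hy
        have e : ∫ x in B, H (x, y) t = ∫ x in B, g (t • x + (1-t) • y) ^ 2 := by
          refine setIntegral_congr_fun hBmeas fun x _ => ?_
          rw [hHdef]; simp only; rw [halg, add_comm ((1-t) • y) (t • x)]
        rw [e]
        exact inner_bd hgc t ((1-t) • y) (by linarith)
          (fun w hw => hBconv hw hy ht.1.le (by linarith [ht.2]) (by ring))
      calc ∫ y in B, ∫ x in B, H (x, y) t
          ≤ ∫ y in B, 2^n * A := by
            refine setIntegral_mono_on hHtint.integral_prod_right
              (integrableOn_const hBcomp.measure_lt_top.ne) hBmeas hinner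
        _ = vB * (2^n * A) := by
            rw [setIntegral_const, hvB, smul_eq_mul]; rfl
  have hTbound : ∫ p, Q p ∂ρ ≤ vB * (2^n * A) := by
    rw [hswap]
    have hmargt : Integrable (fun t => ∫ p, H p t ∂ρ) (volume.restrict (Ioc (0:ℝ) 1)) :=
      hHint.integral_prod_right
    calc ∫ t in Ioc (0:ℝ) 1, ∫ p, H p t ∂ρ
        ≤ ∫ t in Ioc (0:ℝ) 1, vB * (2^n * A) :=
          setIntegral_mono_on hmargt
            (integrableOn_const (by rw [Real.volume_Ioc]; norm_num))
            measurableSet_Ioc perT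
      _ = vB * (2^n * A) := by
          rw [setIntegral_const, Real.volume_real_Ioc, smul_eq_mul]
          norm_num
  calc ∫ x in B, u x ^ 2 ≤ (2*R*M/δ)^2 * vB * ∫ p, Q p ∂ρ := step_outer
    _ ≤ (2*R*M/δ)^2 * vB * (vB * (2^n * A)) := by
        refine mul_le_mul_of_nonneg_left hTbound (by positivity)
    _ = (2*R*M/δ)^2 * vB * (vB * 2^n) * A := by ring
end
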